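/- arXiv:2111.02103 — 6 statements merged into one kernel-verified Lean document; each statement's English description precedes it below -/
import Mathlib

section
/- Let p ≥ 5 be a prime and let m be an integer with 1 ≤ m ≤ (p−3)/2. Then, as a congruence of p-integral rational numbers modulo p²: −p·Σ_{K=p−(2m+1)}^{p−2} H_K/(K+2m+2) ≡ p·( 2·H_{2m}^{(2)} − 2·H_{2m}·H_{2m+1} + Σ_{k=1}^{2m−1} H_k/(2m−k) ) (mod p²). -/
/-- Harmonic number `H_n = ∑_{i=1}^n 1/i` (with `H_0 = 0`). -/
def H (n : ℕ) : ℚ := ∑ i ∈ Finset.range n, 1 / ((i : ℚ) + 1)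
/-- Generalized harmonic number `H_n^{(2)} = ∑_{i=1}^n 1/i²`. -/
def H2 (n : ℕ) : ℚ := ∑ i ∈ Finset.range n, 1 / ((i : ℚ) + 1) ^ 2
/-- Congruence of `p`-integral rationals modulo `p^k`: the `p`-adic valuation of
`x - y` is at least `k`, expressed via the `p`-adic norm. -/
def ratCongr (p k : ℕ) (x y : ℚ) : Prop :=
  padicNorm p (x - y) ≤ (p : ℚ) ^ (-(k : ℤ))

open Finset

lemma H_succ (n : ℕ) : H (n + 1) = H n + 1 / ((n : ℚ) + 1) := by
  simp [H, Finset.sum_range_succ]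

lemma H2_succ (n : ℕ) : H2 (n + 1) = H2 n + 1 / ((n : ℚ) + 1) ^ 2 := by
  simp [H2, Finset.sum_range_succ]

/-- Reversed harmonic convolution. -/
def Aconv (n : ℕ) : ℚ := ∑ k ∈ Finset.range n, H (n - k) / ((k : ℚ) + 1)

lemma conv_ones (n : ℕ) :
    ∑ k ∈ Finset.range (n + 1), 1 / (((k : ℚ) + 1) * (((n - k : ℕ) : ℚ) + 1))
      = 2 * H (n + 1) / ((n : ℚ) + 2) := by
  have hrefl : ∑ k ∈ Finset.range (n + 1), (1 : ℚ) / (((n - k : ℕ) : ℚ) + 1) = H (n + 1) := by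
    have := Finset.sum_range_reflect (fun k => (1 : ℚ) / ((k : ℚ) + 1)) (n + 1)
    simpa [H] using this
  have step : ∑ k ∈ Finset.range (n + 1), 1 / (((k : ℚ) + 1) * (((n - k : ℕ) : ℚ) + 1))
      = ∑ k ∈ Finset.range (n + 1),
          (1 / ((n : ℚ) + 2)) * (1 / ((k : ℚ) + 1) + 1 / (((n - k : ℕ) : ℚ) + 1)) := by
    refine Finset.sum_congr rfl fun k hk => ?_
    have hk' : k ≤ n := Nat.lt_succ_iff.mp (Finset.mem_range.mp hk)
    have hc : ((n - k : ℕ) : ℚ) = (n : ℚ) - k := by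
      rw [Nat.cast_sub hk']
    have hkq : (k : ℚ) ≤ n := by exact_mod_cast hk'
    have h1 : (k : ℚ) + 1 ≠ 0 := by positivity
    have h2 : (n : ℚ) - k + 1 ≠ 0 := by
      have : (0 : ℚ) < (n : ℚ) - k + 1 := by linarith
      linarith
    have h3 : (n : ℚ) + 2 ≠ 0 := by positivity
    rw [hc]
    field_simp
    ring
  rw [step, ← Finset.mul_sum, Finset.sum_add_distrib, hrefl]
  have : ∑ k ∈ Finset.range (n + 1), (1 : ℚ) / ((k : ℚ) + 1) = H (n + 1) := rfl
  rw [this]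
  ring

lemma Aconv_eq (n : ℕ) : Aconv n = H (n + 1) ^ 2 - H2 (n + 1) := by
  induction n with
  | zero => simp [Aconv, H, H2, Finset.sum_range_succ]
  | succ n ih =>
    have h1 : Aconv (n + 1)
        = ∑ k ∈ Finset.range (n + 1),
            (H (n - k) / ((k : ℚ) + 1) + 1 / (((k : ℚ) + 1) * (((n - k : ℕ) : ℚ) + 1))) := by
      unfold Aconv
      refine Finset.sum_congr rfl fun k hk => ?_
      have hk' : k ≤ n := Nat.lt_succ_iff.mp (Finset.mem_range.mp hk)
      have hnk : n + 1 - k = (n - k) + 1 := by omega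
      rw [hnk, H_succ, add_div, div_div]
      congr 1
      rw [mul_comm]
    have h2 : ∑ k ∈ Finset.range (n + 1), H (n - k) / ((k : ℚ) + 1) = Aconv n := by
      rw [Finset.sum_range_succ]
      simp [Aconv, H]
    rw [h1, Finset.sum_add_distrib, h2, conv_ones, ih]
    have e1 : H (n + 1 + 1) = H (n + 1) + 1 / ((n : ℚ) + 2) := by
      rw [H_succ (n + 1)]; push_cast; ring_nf
    have e2 : H2 (n + 1 + 1) = H2 (n + 1) + 1 / ((n : ℚ) + 2) ^ 2 := by
      rw [H2_succ (n + 1)]; push_cast; ring_nf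
    rw [e1, e2]
    have h3 : (n : ℚ) + 2 ≠ 0 := by positivity
    field_simp
    ring

lemma Aconv_reflect (n : ℕ) :
    Aconv n = ∑ k ∈ Finset.range n, H (k + 1) / ((n - k : ℕ) : ℚ) := by
  unfold Aconv
  rw [← Finset.sum_range_reflect (fun k => H (k + 1) / ((n - k : ℕ) : ℚ)) n]
  refine Finset.sum_congr rfl fun k hk => ?_
  have hk' : k < n := Finset.mem_range.mp hk
  have e1 : n - 1 - k + 1 = n - k := by omega
  have e2 : n - (n - 1 - k) = k + 1 := by omega
  rw [e1, e2]
  push_cast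
  ring_nf

section padic
variable {p : ℕ} [hfp : Fact p.Prime]

lemma norm_nat_one {c : ℕ} (h0 : 0 < c) (hc : ¬ p ∣ c) : padicNorm p (c : ℚ) = 1 :=
  (padicNorm.nat_eq_one_iff c).mpr hc

lemma norm_H_le {n : ℕ} (hn : n < p) : padicNorm p (H n) ≤ 1 := by
  unfold H
  refine padicNorm.sum_le' (fun i hi => ?_) zero_le_one
  have hi' : i < n := Finset.mem_range.mp hi
  have hcast : ((i : ℚ) + 1) = ((i + 1 : ℕ) : ℚ) := by push_cast; ring
  rw [hcast, padicNorm.div, padicNorm.one]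
  rw [norm_nat_one (Nat.succ_pos i) (fun hd => by
    have := Nat.le_of_dvd (Nat.succ_pos i) hd; omega)]
  norm_num

lemma Hdiff_le {a b : ℕ} (hab : a + b + 1 = p) (hba : b ≤ a) (hp5 : 5 ≤ p) :
    padicNorm p (H a - H b) ≤ (p : ℚ)⁻¹ := by
  have hkey : H a - H b = ∑ i ∈ Finset.Ico b a, (1 : ℚ) / ((i : ℚ) + 1) := by
    unfold H
    rw [← Finset.sum_range_add_sum_Ico _ hba]
    ring
  have hrefl : ∑ i ∈ Finset.Ico b a, (1 : ℚ) / (((p - 2 - i : ℕ) : ℚ) + 1)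
      = ∑ i ∈ Finset.Ico b a, (1 : ℚ) / ((i : ℚ) + 1) := by
    have h := Finset.sum_Ico_reflect (fun i => (1 : ℚ) / ((i : ℚ) + 1)) b
      (m := a) (n := p - 2) (by omega)
    have e1 : p - 2 + 1 - a = b := by omega
    have e2 : p - 2 + 1 - b = a := by omega
    rw [e1, e2] at h
    exact h
  have h2 : 2 * (H a - H b)
      = ∑ i ∈ Finset.Ico b a, ((1 : ℚ) / ((i : ℚ) + 1) + 1 / (((p - 2 - i : ℕ) : ℚ) + 1)) := by
    rw [Finset.sum_add_distrib, hrefl, ← hkey]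
    ring
  have hbound : padicNorm p (2 * (H a - H b)) ≤ (p : ℚ)⁻¹ := by
    rw [h2]
    refine padicNorm.sum_le' (fun i hi => ?_) (by positivity)
    obtain ⟨hbi, hia⟩ := Finset.mem_Ico.mp hi
    have hi2 : i + 2 ≤ p := by omega
    have hterm : (1 : ℚ) / ((i : ℚ) + 1) + 1 / (((p - 2 - i : ℕ) : ℚ) + 1)
        = (p : ℚ) / (((i + 1 : ℕ) : ℚ) * ((p - 1 - i : ℕ) : ℚ)) := by
      have hc1 : ((p - 2 - i : ℕ) : ℚ) = (p : ℚ) - 2 - i := by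
        have : ((p - 2 - i : ℕ) : ℚ) = ((p : ℚ)) - ((2 + i : ℕ) : ℚ) := by
          rw [show p - 2 - i = p - (2 + i) by omega, Nat.cast_sub (by omega)]
        rw [this]; push_cast; ring
      have hc2 : ((p - 1 - i : ℕ) : ℚ) = (p : ℚ) - 1 - i := by
        have : ((p - 1 - i : ℕ) : ℚ) = ((p : ℚ)) - ((1 + i : ℕ) : ℚ) := by
          rw [show p - 1 - i = p - (1 + i) by omega, Nat.cast_sub (by omega)]
        rw [this]; push_cast; ring
      rw [hc1, hc2]
      have hne1 : (i : ℚ) + 1 ≠ 0 := by positivity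
      have hlt : (i : ℚ) + 2 ≤ (p : ℚ) := by exact_mod_cast hi2
      have hne2 : (p : ℚ) - 2 - i + 1 ≠ 0 := by
        have : (0 : ℚ) < (p : ℚ) - 2 - i + 1 := by linarith
        linarith
      have hne3 : (p : ℚ) - 1 - i ≠ 0 := by
        have : (0 : ℚ) < (p : ℚ) - 1 - i := by linarith
        linarith
      push_cast
      field_simp
      ring
    rw [hterm, padicNorm.div, padicNorm.mul]
    have hn1 : padicNorm p ((i + 1 : ℕ) : ℚ) = 1 :=
      norm_nat_one (by omega) (fun hd => by have := Nat.le_of_dvd (by omega) hd; omega)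
    have hn2 : padicNorm p ((p - 1 - i : ℕ) : ℚ) = 1 :=
      norm_nat_one (by omega) (fun hd => by have := Nat.le_of_dvd (by omega) hd; omega)
    rw [hn1, hn2, padicNorm.padicNorm_p (by omega)]
    norm_num
  have h2norm : padicNorm p (2 * (H a - H b)) = padicNorm p (H a - H b) := by
    rw [padicNorm.mul]
    have : padicNorm p (2 : ℚ) = 1 := by
      have := norm_nat_one (p := p) (c := 2) (by omega)
        (fun hd => by have := Nat.le_of_dvd (by omega) hd; omega)
      simpa using this
    rw [this, one_mul]
  rw [← h2norm]
  exact hbound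

lemma Hdiff_le' {a b : ℕ} (hab : a + b + 1 = p) (hp5 : 5 ≤ p) :
    padicNorm p (H a - H b) ≤ (p : ℚ)⁻¹ := by
  rcases le_total b a with h | h
  · exact Hdiff_le hab h hp5
  · rw [← padicNorm.neg, neg_sub]
    exact Hdiff_le (by omega) h hp5

end padic

/-- Lemma 2: modulo `p²`, the truncated sum of shifted divided harmonic numbers. -/
theorem shifted_harmonic_sum_mod_p_sq (p m : ℕ) (hp : p.Prime) (hp5 : 5 ≤ p)
    (hm1 : 1 ≤ m) (hm2 : m ≤ (p - 3) / 2) :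
    ratCongr p 2
      (-(p : ℚ) * ∑ K ∈ Finset.Icc (p - (2 * m + 1)) (p - 2),
          H K / ((K : ℚ) + 2 * m + 2))
      ((p : ℚ) * (2 * H2 (2 * m) - 2 * H (2 * m) * H (2 * m + 1)
        + ∑ k ∈ Finset.Icc 1 (2 * m - 1), H k / ((2 * m - k : ℕ) : ℚ))) := by
  haveI : Fact p.Prime := ⟨hp⟩
  have hmp : 2 * m + 3 ≤ p := by omega
  -- rewrite the Icc sum over K as a range sum
  have hS : ∑ K ∈ Finset.Icc (p - (2 * m + 1)) (p - 2), H K / ((K : ℚ) + 2 * m + 2)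
      = ∑ k ∈ Finset.range (2 * m), H (p - (2 * m + 1) + k) / ((p : ℚ) + k + 1) := by
    rw [← Finset.Ico_add_one_right_eq_Icc, Finset.sum_Ico_eq_sum_range]
    have hlen : p - 2 + 1 - (p - (2 * m + 1)) = 2 * m := by omega
    rw [hlen]
    refine Finset.sum_congr rfl fun k hk => ?_
    have hk' : k < 2 * m := Finset.mem_range.mp hk
    have hc : ((p - (2 * m + 1) + k : ℕ) : ℚ) = (p : ℚ) - (2 * m + 1) + k := by
      rw [Nat.cast_add, Nat.cast_sub (by omega)]
      push_cast; ring
    rw [hc]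
    congr 1
    push_cast
    ring
  -- rewrite the Icc sum over k as Aconv (2m - 1)
  have hB : ∑ k ∈ Finset.Icc 1 (2 * m - 1), H k / ((2 * m - k : ℕ) : ℚ)
      = Aconv (2 * m - 1) := by
    rw [Aconv_reflect, ← Finset.Ico_add_one_right_eq_Icc, Finset.sum_Ico_eq_sum_range]
    have hlen : 2 * m - 1 + 1 - 1 = 2 * m - 1 := by omega
    rw [hlen]
    refine Finset.sum_congr rfl fun k hk => ?_
    have hk' : k < 2 * m - 1 := Finset.mem_range.mp hk
    have e2 : 2 * m - (1 + k) = 2 * m - 1 - k := by omega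
    have e2' : 2 * m - (k + 1) = 2 * m - 1 - k := by omega
    simp only [e2, e2']
    rw [add_comm 1 k]
  -- the bracket equals -Aconv (2m)
  have hbracket : 2 * H2 (2 * m) - 2 * H (2 * m) * H (2 * m + 1)
      + ∑ k ∈ Finset.Icc 1 (2 * m - 1), H k / ((2 * m - k : ℕ) : ℚ)
      = - Aconv (2 * m) := by
    rw [hB, Aconv_eq, Aconv_eq]
    have e1 : 2 * m - 1 + 1 = 2 * m := by omega
    rw [e1]
    have e2 : H (2 * m + 1) = H (2 * m) + 1 / ((2 * m : ℚ) + 1) := by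
      rw [H_succ (2 * m)]; push_cast; ring_nf
    have e3 : H2 (2 * m + 1) = H2 (2 * m) + 1 / ((2 * m : ℚ) + 1) ^ 2 := by
      rw [H2_succ (2 * m)]; push_cast; ring_nf
    rw [e2, e3]
    have h3 : (2 * m : ℚ) + 1 ≠ 0 := by positivity
    field_simp
    ring
  -- reduce to a mod-p statement
  unfold ratCongr
  rw [hS, hbracket]
  have hdiff : -(p : ℚ) * ∑ k ∈ Finset.range (2 * m),
        H (p - (2 * m + 1) + k) / ((p : ℚ) + k + 1)
      - (p : ℚ) * (- Aconv (2 * m))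
      = -(p : ℚ) * ((∑ k ∈ Finset.range (2 * m),
          H (p - (2 * m + 1) + k) / ((p : ℚ) + k + 1)) - Aconv (2 * m)) := by
    ring
  rw [hdiff, neg_mul, padicNorm.neg, padicNorm.mul, padicNorm.padicNorm_p (by omega)]
  have hpow : ((p : ℚ)) ^ (-((2 : ℕ) : ℤ)) = (p : ℚ)⁻¹ * (p : ℚ)⁻¹ := by
    have hp0 : (p : ℚ) ≠ 0 := by positivity
    rw [show (-((2 : ℕ) : ℤ)) = (-2 : ℤ) by norm_num]
    rw [zpow_neg, show ((2:ℤ)) = ((2:ℕ) : ℤ) by norm_num, zpow_natCast]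
    rw [sq, mul_inv]
  rw [hpow]
  have hmain : padicNorm p ((∑ k ∈ Finset.range (2 * m),
      H (p - (2 * m + 1) + k) / ((p : ℚ) + k + 1)) - Aconv (2 * m)) ≤ (p : ℚ)⁻¹ := by
    unfold Aconv
    rw [← Finset.sum_sub_distrib]
    refine padicNorm.sum_le' (fun k hk => ?_) (by positivity)
    have hk' : k < 2 * m := Finset.mem_range.mp hk
    set a := p - (2 * m + 1) + k with ha
    set b := 2 * m - k with hb
    have hab : a + b + 1 = p := by omega
    -- algebraic split
    have hcastP : ((p : ℚ) + k + 1) = ((p + k + 1 : ℕ) : ℚ) := by push_cast; ring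
    have hcastk : ((k : ℚ) + 1) = ((k + 1 : ℕ) : ℚ) := by push_cast; ring
    have hsplit : H a / ((p : ℚ) + k + 1) - H b / ((k : ℚ) + 1)
        = (H a - H b) * (1 / ((p : ℚ) + k + 1))
          + H b * (1 / ((p : ℚ) + k + 1) - 1 / ((k : ℚ) + 1)) := by
      ring
    rw [hsplit]
    have hnP : padicNorm p ((p + k + 1 : ℕ) : ℚ) = 1 :=
      norm_nat_one (by omega) (fun hd => by
        have h1 : p ∣ k + 1 := (Nat.dvd_add_right ⟨1, rfl⟩).mp (by
          have : p + k + 1 = p * 1 + (k + 1) := by ring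
          rwa [this] at hd)
        have := Nat.le_of_dvd (by omega) h1; omega)
    have hnk : padicNorm p ((k + 1 : ℕ) : ℚ) = 1 :=
      norm_nat_one (by omega) (fun hd => by have := Nat.le_of_dvd (by omega) hd; omega)
    have hterm1 : padicNorm p ((H a - H b) * (1 / ((p : ℚ) + k + 1))) ≤ (p : ℚ)⁻¹ := by
      rw [padicNorm.mul, hcastP, padicNorm.div, padicNorm.one, hnP]
      have := Hdiff_le' (p := p) hab hp5
      calc padicNorm p (H a - H b) * (1 / 1) = padicNorm p (H a - H b) := by norm_num
        _ ≤ (p : ℚ)⁻¹ := this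
    have hterm2 : padicNorm p (H b * (1 / ((p : ℚ) + k + 1) - 1 / ((k : ℚ) + 1)))
        ≤ (p : ℚ)⁻¹ := by
      have hveq : 1 / ((p : ℚ) + k + 1) - 1 / ((k : ℚ) + 1)
          = -(p : ℚ) * (1 / ((p + k + 1 : ℕ) : ℚ)) * (1 / ((k + 1 : ℕ) : ℚ)) := by
        rw [← hcastP, ← hcastk]
        have h1 : (p : ℚ) + k + 1 ≠ 0 := by positivity
        have h2 : (k : ℚ) + 1 ≠ 0 := by positivity
        field_simp
        ring
      rw [hveq, padicNorm.mul, neg_mul, neg_mul, padicNorm.neg, padicNorm.mul,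
        padicNorm.mul, padicNorm.div, padicNorm.div, padicNorm.one, hnP, hnk,
        padicNorm.padicNorm_p (by omega)]
      have hHb : padicNorm p (H b) ≤ 1 := norm_H_le (by omega)
      have hnn : (0 : ℚ) ≤ (p : ℚ)⁻¹ := by positivity
      calc padicNorm p (H b) * ((p : ℚ)⁻¹ * (1 / 1) * (1 / 1))
          = padicNorm p (H b) * (p : ℚ)⁻¹ := by norm_num
        _ ≤ 1 * (p : ℚ)⁻¹ := by
            exact mul_le_mul_of_nonneg_right hHb hnn
        _ = (p : ℚ)⁻¹ := by ring
    calc padicNorm p _ ≤ max (padicNorm p ((H a - H b) * (1 / ((p : ℚ) + k + 1))))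
          (padicNorm p (H b * (1 / ((p : ℚ) + k + 1) - 1 / ((k : ℚ) + 1))))
        := padicNorm.nonarchimedean
      _ ≤ (p : ℚ)⁻¹ := max_le hterm1 hterm2
  calc (p : ℚ)⁻¹ * padicNorm p _ ≤ (p : ℚ)⁻¹ * (p : ℚ)⁻¹ :=
      mul_le_mul_of_nonneg_left hmain (by positivity)
end

section
/- Let p ≥ 5 be a prime. Then Σ_{k even, 2 ≤ k ≤ p−1} k^{p−2} ≡ −Σ_{k odd, 1 ≤ k ≤ p−2} k^{p−2} (mod p²). -/
/-- Binomial expansion to first order modulo `b ^ 2`. -/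
lemma binom_mod (a b : ℤ) : ∀ n : ℕ, (b ^ 2 : ℤ) ∣ (a + b) ^ n - (a ^ n + n * a ^ (n - 1) * b)
  | 0 => by simp
  | 1 => by simp
  | (n + 2) => by
    have ih := binom_mod a b (n + 1)
    have key : (a + b) ^ (n + 2) - (a ^ (n + 2) + (↑(n + 2)) * a ^ (n + 2 - 1) * b)
        = ((a + b) ^ (n + 1) - (a ^ (n + 1) + (↑(n + 1)) * a ^ (n + 1 - 1) * b)) * (a + b)
          + (↑(n + 1)) * a ^ n * b ^ 2 := by
      have e1 : n + 2 - 1 = n + 1 := by omega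
      have e2 : n + 1 - 1 = n := by omega
      rw [e1, e2]
      push_cast
      ring
    rw [key]
    exact dvd_add (ih.mul_right _) (Dvd.intro_left _ rfl)

/-- The sum of `(p-3)`-rd powers over `1..p-1` is divisible by `p`. -/
lemma aux_p_dvd (p : ℕ) (hp : p.Prime) (hp5 : 5 ≤ p) :
    (p : ℤ) ∣ ∑ k ∈ Finset.Icc 1 (p - 1), (k : ℤ) ^ (p - 3) := by
  haveI : Fact p.Prime := ⟨hp⟩
  rw [← ZMod.intCast_zmod_eq_zero_iff_dvd]
  push_cast
  have h0 : ∑ k ∈ Finset.range p, (k : ZMod p) ^ (p - 3)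
      = ∑ k ∈ Finset.Icc 1 (p - 1), (k : ZMod p) ^ (p - 3) := by
    have hins : Finset.range p = insert 0 (Finset.Icc 1 (p - 1)) := by
      ext k
      simp only [Finset.mem_range, Finset.mem_insert, Finset.mem_Icc]
      omega
    rw [hins, Finset.sum_insert (by simp)]
    rw [Nat.cast_zero, zero_pow (by omega : p - 3 ≠ 0), zero_add]
  rw [← h0]
  have hcard : Fintype.card (ZMod p) = p := ZMod.card p
  have huniv : ∑ k ∈ Finset.range p, (k : ZMod p) ^ (p - 3)
      = ∑ x : ZMod p, x ^ (p - 3) := by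
    apply Finset.sum_nbij' (i := fun k : ℕ => ((k : ℕ) : ZMod p)) (j := fun x => x.val)
    · intro a _; exact Finset.mem_univ _
    · intro x _; rw [Finset.mem_range]; exact ZMod.val_lt x
    · intro a ha; rw [Finset.mem_range] at ha; exact ZMod.val_cast_of_lt ha
    · intro x _; exact ZMod.natCast_rightInverse x
    · intro a _; rfl
  rw [huniv]
  apply FiniteField.sum_pow_lt_card_sub_one
  rw [hcard]; omega

/-- Modulo `p²`, the sum of `k^{p-2}` over even `k` in `{2,…,p−1}` is the negative of
the sum over odd `k` in `{1,…,p−2}`. -/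
theorem even_odd_power_sums (p : ℕ) (hp : p.Prime) (hp5 : 5 ≤ p) :
    ((p : ℤ) ^ 2) ∣
      (∑ k ∈ (Finset.Icc 2 (p - 1)).filter (fun k => Even k), (k : ℤ) ^ (p - 2))
        - (-∑ k ∈ (Finset.Icc 1 (p - 2)).filter (fun k => Odd k), (k : ℤ) ^ (p - 2)) := by
  have hodd : p % 2 = 1 := Nat.odd_iff.mp (hp.odd_of_ne_two (by omega))
  -- Step 1: combine the two sums into a single sum over `Icc 1 (p-1)`.
  rw [sub_neg_eq_add]
  have h1 : (Finset.Icc 2 (p - 1)).filter (fun k => Even k)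
      = (Finset.Icc 1 (p - 1)).filter (fun k => Even k) := by
    ext k
    simp only [Finset.mem_filter, Finset.mem_Icc, Nat.even_iff]
    omega
  have h2 : (Finset.Icc 1 (p - 2)).filter (fun k => Odd k)
      = (Finset.Icc 1 (p - 1)).filter (fun k => ¬ Even k) := by
    ext k
    simp only [Finset.mem_filter, Finset.mem_Icc, Nat.odd_iff, Nat.even_iff]
    omega
  rw [h1, h2, Finset.sum_filter_add_sum_filter_not]
  set n := p - 2 with hn
  set S := ∑ k ∈ Finset.Icc 1 (p - 1), (k : ℤ) ^ n with hS
  -- Step 2: reflection `k ↦ p - k`.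
  have hrefl : ∑ k ∈ Finset.Icc 1 (p - 1), ((p : ℤ) - (k : ℤ)) ^ n = S := by
    rw [hS]
    apply Finset.sum_bij' (i := fun k _ => p - k) (j := fun k _ => p - k)
    · intro a ha; rw [Finset.mem_Icc] at *; omega
    · intro a ha; rw [Finset.mem_Icc] at *; omega
    · intro a ha; rw [Finset.mem_Icc] at ha; omega
    · intro a ha; rw [Finset.mem_Icc] at ha; omega
    · intro a ha
      rw [Finset.mem_Icc] at ha
      congr 1
      have : (↑(p - a) : ℤ) = (p : ℤ) - (a : ℤ) := by
        push_cast [Nat.cast_sub (by omega : a ≤ p)]; ring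
      rw [this]
  -- Step 3: per-element congruence.
  have hkey : ∀ k ∈ Finset.Icc 1 (p - 1),
      ((p : ℤ) ^ 2) ∣ (k : ℤ) ^ n + ((p : ℤ) - (k : ℤ)) ^ n
        - (n : ℤ) * (p : ℤ) * (k : ℤ) ^ (n - 1) := by
    intro k _
    have hb := binom_mod (-(k : ℤ)) (p : ℤ) n
    have hne : (-(k : ℤ) + (p : ℤ)) = (p : ℤ) - (k : ℤ) := by ring
    rw [hne] at hb
    have hnodd : Odd n := by rw [Nat.odd_iff]; omega
    have e1 : (-(k : ℤ)) ^ n = -((k : ℤ) ^ n) := hnodd.neg_pow _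
    have e2 : (-(k : ℤ)) ^ (n - 1) = (k : ℤ) ^ (n - 1) := by
      have : Even (n - 1) := by rw [Nat.even_iff]; omega
      exact this.neg_pow _
    rw [e1, e2] at hb
    have : (k : ℤ) ^ n + ((p : ℤ) - (k : ℤ)) ^ n - (n : ℤ) * (p : ℤ) * (k : ℤ) ^ (n - 1)
        = ((p : ℤ) - (k : ℤ)) ^ n - (-((k : ℤ) ^ n) + (n : ℤ) * (k : ℤ) ^ (n - 1) * (p : ℤ)) := by
      ring
    rw [this]; exact hb
  -- Step 4: sum the congruences.
  set T := ∑ k ∈ Finset.Icc 1 (p - 1), (k : ℤ) ^ (n - 1) with hT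
  have hsum : ((p : ℤ) ^ 2) ∣ (S + S) - (n : ℤ) * (p : ℤ) * T := by
    have := Finset.dvd_sum hkey
    have heq : ∑ k ∈ Finset.Icc 1 (p - 1),
        ((k : ℤ) ^ n + ((p : ℤ) - (k : ℤ)) ^ n - (n : ℤ) * (p : ℤ) * (k : ℤ) ^ (n - 1))
        = (S + S) - (n : ℤ) * (p : ℤ) * T := by
      rw [Finset.sum_sub_distrib, Finset.sum_add_distrib, hrefl, ← Finset.mul_sum, ← hT, ← hS]
    rwa [heq] at this
  -- Step 5: `(n : ℤ) * p = p^2 - 2p`, and `p ∣ T`.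
  have hpn : ((n : ℤ) * (p : ℤ)) = (p : ℤ) ^ 2 - 2 * (p : ℤ) := by
    have : (n : ℤ) = (p : ℤ) - 2 := by rw [hn]; push_cast [Nat.cast_sub (by omega : 2 ≤ p)]; ring
    rw [this]; ring
  have hpT : (p : ℤ) ∣ T := by
    have : n - 1 = p - 3 := by omega
    rw [hT, this]; exact aux_p_dvd p hp hp5
  obtain ⟨t, ht⟩ := hpT
  have h2S : ((p : ℤ) ^ 2) ∣ 2 * S := by
    have : 2 * S = ((S + S) - (n : ℤ) * (p : ℤ) * T) + (p : ℤ) ^ 2 * T - 2 * ((p : ℤ) ^ 2 * t) := by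
      rw [hpn]; rw [ht]; ring
    rw [this]
    exact dvd_sub (dvd_add hsum (dvd_mul_right _ _)) ((dvd_mul_right _ _).mul_left 2)
  -- Step 6: remove the factor 2.
  have hcop : IsCoprime ((p : ℤ) ^ 2) 2 := by
    apply IsCoprime.pow_left
    have hcp : Nat.Coprime p 2 := (Nat.Prime.coprime_iff_not_dvd hp).mpr
      (fun h => by have := Nat.le_of_dvd (by norm_num) h; omega)
    have := Nat.isCoprime_iff_coprime.mpr hcp
    exact_mod_cast this
  exact hcop.dvd_of_dvd_mul_left h2S
end

section
/- Let p ≥ 5 be a prime. Then Σ_{k=1}^{(p−1)/2} k^{p−3} ≡ 0 (mod p). -/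
/-- `∑_{k=1}^{(p−1)/2} k^{p−3} ≡ 0 (mod p)`. -/
theorem sum_half_powers_p_sub_three (p : ℕ) (hp : p.Prime) (hp5 : 5 ≤ p) :
    (p : ℤ) ∣ ∑ k ∈ Finset.Icc 1 ((p - 1) / 2), (k : ℤ) ^ (p - 3) := by
  haveI : Fact p.Prime := ⟨hp⟩
  have hodd : Odd p := hp.odd_of_ne_two (by omega)
  obtain ⟨m, hm⟩ : ∃ m, p = 2 * m + 1 := hodd
  have hmval : (p - 1) / 2 = m := by omega
  have heven : Even (p - 3) := ⟨m - 1, by omega⟩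
  set f : ℕ → ZMod p := fun k => (k : ZMod p) ^ (p - 3) with hf
  set S : ZMod p := ∑ k ∈ Finset.Ioc 0 m, f k with hS
  -- total sum over all of ZMod p is zero
  have htot : ∑ x : ZMod p, x ^ (p - 3) = 0 := by
    apply FiniteField.sum_pow_lt_card_sub_one
    rw [ZMod.card]
    omega
  -- sum over range p equals sum over univ
  have hrange : ∑ k ∈ Finset.range p, f k = ∑ x : ZMod p, x ^ (p - 3) := by
    refine Finset.sum_nbij' (fun k => (k : ZMod p)) (fun x => x.val) ?_ ?_ ?_ ?_ ?_
    · intro a _; exact Finset.mem_univ _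
    · intro a _; exact Finset.mem_range.mpr (ZMod.val_lt a)
    · intro a ha; exact ZMod.val_natCast_of_lt (Finset.mem_range.mp ha)
    · intro a _; exact ZMod.natCast_zmod_val a
    · intro a _; rfl
  -- range p sum = Ioc 0 (p-1) sum since f 0 = 0
  have hins : Finset.range p = insert 0 (Finset.Ioc 0 (p - 1)) := by
    ext x
    simp only [Finset.mem_range, Finset.mem_insert, Finset.mem_Ioc]
    omega
  have hIcc : ∑ k ∈ Finset.Ioc 0 (p - 1), f k = 0 := by
    have h0 : f 0 = 0 := by
      simp only [hf, Nat.cast_zero]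
      exact zero_pow (by omega)
    have := hrange
    rw [hins, Finset.sum_insert (by simp), h0, zero_add] at this
    rw [this, htot]
  -- reflection: sum over Ioc m (2m) equals S
  have hrefl : ∑ k ∈ Finset.Ioc m (2 * m), f k = S := by
    rw [hS]
    refine Finset.sum_nbij' (fun k => p - k) (fun k => p - k) ?_ ?_ ?_ ?_ ?_
    · intro a ha
      simp only [Finset.mem_Ioc] at ha ⊢
      omega
    · intro a ha
      simp only [Finset.mem_Ioc] at ha ⊢
      omega
    · intro a ha; simp only [Finset.mem_Ioc] at ha; show p - (p - a) = a; omega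
    · intro a ha; simp only [Finset.mem_Ioc] at ha; show p - (p - a) = a; omega
    · intro a ha
      simp only [Finset.mem_Ioc] at ha
      simp only [hf]
      have hle : a ≤ p := by omega
      rw [Nat.cast_sub hle, ZMod.natCast_self, zero_sub, heven.neg_pow]
  -- split
  have hsplit : ∑ k ∈ Finset.Ioc 0 m, f k + ∑ k ∈ Finset.Ioc m (2 * m), f k
      = ∑ k ∈ Finset.Ioc 0 (2 * m), f k :=
    Finset.sum_Ioc_consecutive f (by omega) (by omega)
  have h2m : (2 : ℕ) * m = p - 1 := by omega
  have h2S : 2 * S = 0 := by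
    have h := hsplit
    rw [hrefl, h2m, hIcc, ← hS] at h
    rw [two_mul, h]
  have h2ne : (2 : ZMod p) ≠ 0 := by
    have : ((2 : ℕ) : ZMod p) ≠ 0 := by
      rw [Ne, ZMod.natCast_eq_zero_iff]
      intro h
      have := Nat.le_of_dvd (by norm_num) h
      omega
    simpa using this
  have hS0 : S = 0 := by
    rcases mul_eq_zero.mp h2S with h | h
    · exact absurd h h2ne
    · exact h
  -- conclude
  rw [← ZMod.intCast_zmod_eq_zero_iff_dvd]
  push_cast
  rw [hmval]
  have : Finset.Icc 1 m = Finset.Ioc 0 m := by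
    ext x; simp [Finset.mem_Icc, Finset.mem_Ioc]; omega
  rw [this]
  exact hS0
end

section
/- Let p ≥ 5 be a prime. Then the Fermat quotient q_2(p) = (2^{p−1} − 1)/p satisfies q_2(p) ≡ H'_{p−1} (mod p), where H'_{p−1} = 1 + 1/3 + 1/5 + ⋯ + 1/(p−2) is the sum of the reciprocals of the odd integers from 1 to p−2. -/
open Finset

section FermatQuotientAux

private def Cong (p : ℕ) (x y : ℚ) : Prop := padicNorm p (x - y) ≤ (p : ℚ) ^ (-1 : ℤ)

private lemma cong_of_eq {p : ℕ} [Fact p.Prime] {x y : ℚ} (h : x = y) : Cong p x y := by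
  unfold Cong
  rw [h, sub_self]
  simp only [padicNorm.zero]
  positivity

private lemma cong_trans {p : ℕ} [Fact p.Prime] {x y z : ℚ} (h1 : Cong p x y) (h2 : Cong p y z) :
    Cong p x z := by
  unfold Cong at *
  have h : x - z = (x - y) + (y - z) := by ring
  rw [h]
  exact le_trans padicNorm.nonarchimedean (max_le h1 h2)

private lemma cong_add {p : ℕ} [Fact p.Prime] {x y x' y' : ℚ} (h1 : Cong p x y) (h2 : Cong p x' y') :
    Cong p (x + x') (y + y') := by
  unfold Cong at *
  have h : x + x' - (y + y') = (x - y) + (x' - y') := by ring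
  rw [h]
  exact le_trans padicNorm.nonarchimedean (max_le h1 h2)

private lemma cong_sum {p : ℕ} [Fact p.Prime] {ι : Type*} {s : Finset ι} {f g : ι → ℚ}
    (h : ∀ i ∈ s, Cong p (f i) (g i)) :
    Cong p (∑ i ∈ s, f i) (∑ i ∈ s, g i) := by
  classical
  induction s using Finset.induction_on with
  | empty => exact cong_of_eq (by simp)
  | insert _ _ hx ih =>
    rw [Finset.sum_insert hx, Finset.sum_insert hx]
    exact cong_add (h _ (Finset.mem_insert_self _ _))
      (ih fun i hi => h i (Finset.mem_insert_of_mem hi))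

private lemma cong_int {p : ℕ} [Fact p.Prime] {a b : ℤ} (ha : (p : ℤ) ∣ a)
    (hb : ¬ (p : ℤ) ∣ b) : Cong p ((a : ℚ) / (b : ℚ)) 0 := by
  unfold Cong
  rw [sub_zero, padicNorm.div]
  rw [padicNorm.int_eq_one_iff b |>.mpr hb, div_one]
  have := (padicNorm.dvd_iff_norm_le (p := p) (n := 1) (z := a)).mp (by simpa using ha)
  simpa using this

private lemma norm_two_eq_one {p : ℕ} [Fact p.Prime] (hp5 : 5 ≤ p) :
    padicNorm p (2 : ℚ) = 1 := by
  have h2 : ¬ (p : ℤ) ∣ (2 : ℤ) := by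
    intro h
    have := Int.le_of_dvd (by norm_num) h
    omega
  simpa using padicNorm.int_eq_one_iff (p := p) 2 |>.mpr h2

private lemma choose_cong {p : ℕ} (hp : p.Prime) :
    ∀ k, k ≤ p - 1 → (p : ℤ) ∣ ((p - 1).choose k : ℤ) - (-1) ^ k := by
  intro k
  induction k with
  | zero => simp
  | succ k ih =>
    intro hk1
    have hk : k ≤ p - 1 := Nat.le_of_succ_le hk1
    have hch : p.choose (k + 1) = (p - 1).choose k + (p - 1).choose (k + 1) := by
      have h1 : p - 1 + 1 = p := Nat.succ_pred_eq_of_pos hp.pos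
      rw [← h1]
      exact Nat.choose_succ_succ _ _
    have hd : (p : ℤ) ∣ (p.choose (k + 1) : ℤ) := by
      exact_mod_cast Int.natCast_dvd_natCast.mpr
        (hp.dvd_choose_self (Nat.succ_ne_zero k) (by omega))
    have key : ((p - 1).choose (k + 1) : ℤ) - (-1) ^ (k + 1)
        = (p.choose (k + 1) : ℤ) - (((p - 1).choose k : ℤ) - (-1) ^ k) := by
      rw [hch]; push_cast; ring
    rw [key]
    exact dvd_sub hd (ih hk)

private lemma sum_choose_mid {p : ℕ} (hp5 : 5 ≤ p) :
    ∑ k ∈ Icc 1 (p - 1), (p.choose k : ℚ) = 2 ^ p - 2 := by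
  have h0 : ∑ k ∈ range (p + 1), (p.choose k : ℚ) = 2 ^ p := by
    exact_mod_cast congrArg (Nat.cast : ℕ → ℚ) (Nat.sum_range_choose p)
  have hIcc : Icc 1 (p - 1) = Ico 1 p := by
    rw [← Finset.Ico_add_one_right_eq_Icc]
    congr 1
    omega
  have hr : range (p + 1) = Ico 0 (p + 1) := by rw [Finset.range_eq_Ico]
  have h1 : ∑ k ∈ Ico 0 1, (p.choose k : ℚ) + ∑ k ∈ Ico 1 p, (p.choose k : ℚ)
      = ∑ k ∈ Ico 0 p, (p.choose k : ℚ) :=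
    Finset.sum_Ico_consecutive _ (by omega) (by omega)
  have h2 : ∑ k ∈ Ico 0 p, (p.choose k : ℚ) + ∑ k ∈ Ico p (p + 1), (p.choose k : ℚ)
      = ∑ k ∈ Ico 0 (p + 1), (p.choose k : ℚ) :=
    Finset.sum_Ico_consecutive _ (by omega) (by omega)
  have e1 : ∑ k ∈ Ico 0 1, (p.choose k : ℚ) = 1 := by simp
  have e2 : ∑ k ∈ Ico p (p + 1), (p.choose k : ℚ) = 1 := by simp
  rw [hIcc]
  rw [hr] at h0
  rw [e1] at h1
  rw [e2] at h2
  linarith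

private lemma half_choose {p : ℕ} (hp : p.Prime) {k : ℕ} (hk1 : 1 ≤ k) :
    (p.choose k : ℚ) / (2 * p) = ((p - 1).choose (k - 1) : ℚ) / (2 * k) := by
  have hid : p * (p - 1).choose (k - 1) = p.choose k * k := by
    have h := Nat.add_one_mul_choose_eq (p - 1) (k - 1)
    have h1 : p - 1 + 1 = p := Nat.succ_pred_eq_of_pos hp.pos
    have h2 : k - 1 + 1 = k := Nat.succ_pred_eq_of_pos hk1
    simpa [Nat.succ_eq_add_one, h1, h2] using h
  have hp0 : (p : ℚ) ≠ 0 := Nat.cast_ne_zero.mpr hp.pos.ne'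
  have hk0 : (k : ℚ) ≠ 0 := Nat.cast_ne_zero.mpr (by omega)
  field_simp
  have h := congrArg (Nat.cast : ℕ → ℚ) hid
  push_cast at h
  linarith [h]

private lemma H_cong_zero {p : ℕ} [Fact p.Prime] (hp : p.Prime) (hp5 : 5 ≤ p) :
    Cong p (∑ k ∈ Icc 1 (p - 1), (1 : ℚ) / k) 0 := by
  set H : ℚ := ∑ k ∈ Icc 1 (p - 1), (1 : ℚ) / k with hH
  have hrefl : H = ∑ k ∈ Icc 1 (p - 1), (1 : ℚ) / ((p - k : ℕ) : ℚ) := by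
    rw [hH]
    refine Finset.sum_nbij' (fun i => p - i) (fun j => p - j) ?_ ?_ ?_ ?_ ?_
    · intro a ha; simp only [mem_Icc] at *; omega
    · intro a ha; simp only [mem_Icc] at *; omega
    · intro a ha; simp only [mem_Icc] at *; omega
    · intro a ha; simp only [mem_Icc] at *; omega
    · intro a ha
      simp only [mem_Icc] at ha
      have h : p - (p - a) = a := by omega
      rw [h]
  have hsum : H + H = ∑ k ∈ Icc 1 (p - 1), ((p : ℚ) / ((k * (p - k) : ℕ) : ℚ)) := by
    nth_rewrite 2 [hrefl]
    rw [← Finset.sum_add_distrib]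
    refine Finset.sum_congr rfl ?_
    intro k hk
    simp only [mem_Icc] at hk
    have hk0 : (k : ℚ) ≠ 0 := Nat.cast_ne_zero.mpr (by omega)
    have hc : ((p - k : ℕ) : ℚ) = (p : ℚ) - k := by
      push_cast [Nat.cast_sub (by omega : k ≤ p)]; ring
    have hpk0 : ((p - k : ℕ) : ℚ) ≠ 0 := by
      rw [hc]
      have : (k : ℚ) < p := by exact_mod_cast (by omega : k < p)
      linarith
    have hpk0' : (p : ℚ) - k ≠ 0 := by rwa [hc] at hpk0
    rw [hc]
    push_cast
    field_simp
    rw [hc]; ring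
  have h2H : Cong p (H + H) 0 := by
    rw [hsum]
    have h0 : (0 : ℚ) = ∑ k ∈ Icc 1 (p - 1), (0 : ℚ) := by simp
    rw [h0]
    refine cong_sum ?_
    intro k hk
    simp only [mem_Icc] at hk
    have ha : (p : ℤ) ∣ (p : ℤ) := dvd_refl _
    have hb : ¬ (p : ℤ) ∣ ((k * (p - k) : ℕ) : ℤ) := by
      rw [Int.natCast_dvd_natCast]
      intro hdvd
      rcases (Nat.Prime.dvd_mul hp).mp hdvd with h | h
      · exact absurd (Nat.le_of_dvd (by omega) h) (by omega)
      · exact absurd (Nat.le_of_dvd (by omega) h) (by omega)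
    simpa using cong_int (p := p) ha hb
  unfold Cong at h2H ⊢
  have hnorm2 : padicNorm p (2 : ℚ) = 1 := norm_two_eq_one hp5
  have he : H + H - 0 = 2 * (H - 0) := by ring
  rw [he, padicNorm.mul, hnorm2, one_mul] at h2H
  exact h2H

end FermatQuotientAux

/-- The Fermat quotient `q_2(p)` is congruent mod `p` to the sum of reciprocals of
the odd integers from `1` to `p−2`. -/
theorem fermat_quotient_odd_reciprocals (p : ℕ) (hp : p.Prime) (hp5 : 5 ≤ p) :
    ratCongr p 1
      (((2 : ℚ) ^ (p - 1) - 1) / p)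
      (∑ i ∈ (Finset.Icc 1 (p - 2)).filter (fun i => Odd i), 1 / (i : ℚ)) := by
  haveI : Fact p.Prime := ⟨hp⟩
  have hpodd : p % 2 = 1 := Nat.odd_iff.mp (hp.odd_of_ne_two (by omega))
  set s : Finset ℕ := Icc 1 (p - 1) with hs
  -- Step A: exact identity for the Fermat quotient as a sum
  have stepA : ((2 : ℚ) ^ (p - 1) - 1) / p = ∑ k ∈ s, (p.choose k : ℚ) / (2 * p) := by
    rw [← Finset.sum_div, sum_choose_mid hp5]
    have hpow : (2 : ℚ) ^ p = 2 * 2 ^ (p - 1) := by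
      conv_lhs => rw [show p = (p - 1) + 1 by omega]
      ring
    have hp0 : (p : ℚ) ≠ 0 := Nat.cast_ne_zero.mpr hp.pos.ne'
    rw [hpow]
    field_simp
  -- Step B: termwise exact rewriting
  have stepB : ∑ k ∈ s, (p.choose k : ℚ) / (2 * p)
      = ∑ k ∈ s, ((p - 1).choose (k - 1) : ℚ) / (2 * k) := by
    refine Finset.sum_congr rfl ?_
    intro k hk
    simp only [hs, mem_Icc] at hk
    exact half_choose hp hk.1
  -- Step C: congruence to alternating sum, termwise
  have stepC : Cong p (∑ k ∈ s, ((p - 1).choose (k - 1) : ℚ) / (2 * k))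
      (∑ k ∈ s, (-1 : ℚ) ^ (k + 1) / (2 * k)) := by
    refine cong_sum ?_
    intro k hk
    simp only [hs, mem_Icc] at hk
    set a : ℤ := ((p - 1).choose (k - 1) : ℤ) - (-1) ^ (k + 1) with ha
    set b : ℤ := ((2 * k : ℕ) : ℤ) with hb
    have hpow : ((-1 : ℤ)) ^ (k + 1) = (-1) ^ (k - 1) := by
      have h : k + 1 = (k - 1) + 2 := by omega
      rw [h, pow_add]
      norm_num
    have hadvd : (p : ℤ) ∣ a := by
      rw [ha, hpow]
      exact choose_cong hp (k - 1) (by omega)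
    have hbdvd : ¬ (p : ℤ) ∣ b := by
      rw [hb, Int.natCast_dvd_natCast]
      intro h
      rcases (Nat.Prime.dvd_mul hp).mp h with h' | h'
      · have := Nat.le_of_dvd (by norm_num) h'
        omega
      · have := Nat.le_of_dvd (by omega) h'
        omega
    have hc := cong_int (p := p) hadvd hbdvd
    unfold Cong at hc ⊢
    rw [sub_zero] at hc
    have hrw : ((p - 1).choose (k - 1) : ℚ) / (2 * k) - (-1 : ℚ) ^ (k + 1) / (2 * k)
        = (a : ℚ) / (b : ℚ) := by
      rw [ha, hb]
      push_cast
      ring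
    rw [hrw]
    exact hc
  -- Step D: the alternating sum vs the odd-reciprocal sum
  have hfilter : (Icc 1 (p - 2)).filter (fun i => Odd i)
      = s.filter (fun i => Odd i) := by
    rw [hs]
    ext x
    simp only [Finset.mem_filter, mem_Icc, Nat.odd_iff]
    omega
  set A : ℚ := ∑ k ∈ s.filter (fun i => Odd i), 1 / (k : ℚ) with hA
  set B : ℚ := ∑ k ∈ s.filter (fun i => ¬ Odd i), 1 / (k : ℚ) with hB
  have hT : ∑ k ∈ s, (-1 : ℚ) ^ (k + 1) / (2 * k) = (1/2) * A - (1/2) * B := by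
    rw [← Finset.sum_filter_add_sum_filter_not s (fun i => Odd i)]
    have hodd : ∑ k ∈ s.filter (fun i => Odd i), (-1 : ℚ) ^ (k + 1) / (2 * k)
        = (1/2) * A := by
      rw [hA, Finset.mul_sum]
      refine Finset.sum_congr rfl ?_
      intro k hk
      have hko : Odd k := (Finset.mem_filter.mp hk).2
      have : ((-1 : ℚ)) ^ (k + 1) = 1 := Even.neg_one_pow (by exact Odd.add_one hko)
      rw [this]
      ring
    have heven : ∑ k ∈ s.filter (fun i => ¬ Odd i), (-1 : ℚ) ^ (k + 1) / (2 * k)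
        = -((1/2) * B) := by
      rw [hB, Finset.mul_sum, ← Finset.sum_neg_distrib]
      refine Finset.sum_congr rfl ?_
      intro k hk
      have hke : Even k := Nat.not_odd_iff_even.mp (Finset.mem_filter.mp hk).2
      have : ((-1 : ℚ)) ^ (k + 1) = -1 := Odd.neg_one_pow (Even.add_one hke)
      rw [this]
      ring
    rw [hodd, heven]
    ring
  have hH : ∑ k ∈ s, (1 : ℚ) / k = A + B := by
    rw [hA, hB, ← Finset.sum_filter_add_sum_filter_not s (fun i => Odd i)]
  -- final: Cong p T S where S = A
  have stepD : Cong p (∑ k ∈ s, (-1 : ℚ) ^ (k + 1) / (2 * k)) A := by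
    have hHc := H_cong_zero (p := p) hp hp5
    unfold Cong at hHc ⊢
    rw [sub_zero] at hHc
    rw [hH] at hHc
    have hdiff : ∑ k ∈ s, (-1 : ℚ) ^ (k + 1) / (2 * k) - A = (1/2) * (-(A + B)) := by
      rw [hT]; ring
    have hdiff2 : ∑ k ∈ s, (-1 : ℚ) ^ (k + 1) / (2 * k) - A = (-(A + B)) / 2 := by
      rw [hT]; ring
    rw [hdiff2, padicNorm.div, norm_two_eq_one hp5, div_one, padicNorm.neg]
    exact hHc
  -- conclusion
  unfold ratCongr
  rw [hfilter]
  have hfinal := cong_trans (cong_of_eq (stepA.trans stepB)) (cong_trans stepC stepD)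
  unfold Cong at hfinal
  simpa [hA, one_div] using hfinal
end

section
/- Let p ≥ 5 be a prime. Then Σ_{j=2}^{p−3} B_j·B_{p−1−j} ≡ 1 (mod p), as a congruence of p-integral rational numbers. -/
open PowerSeries Finset Nat

lemma bernoulli_odd_zero {n : ℕ} (h : Odd n) (h1 : 1 < n) : bernoulli n = 0 := by
  have := bernoulli'_eq_bernoulli n
  rw [bernoulli'_eq_zero_of_odd h h1, Odd.neg_one_pow h] at this
  linarith

lemma exp_deriv : d⁄dX ℚ (exp ℚ) = exp ℚ := by
  ext n
  rw [coeff_derivative, coeff_exp, coeff_exp]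
  simp only [Algebra.algebraMap_self, RingHom.id_apply, one_div]
  rw [Nat.factorial_succ]
  push_cast
  rw [mul_inv]
  field_simp

lemma bps_sq : (bernoulliPowerSeries ℚ) ^ 2 =
    bernoulliPowerSeries ℚ - X * bernoulliPowerSeries ℚ -
      X * (d⁄dX ℚ (bernoulliPowerSeries ℚ)) := by
  set B := bernoulliPowerSeries ℚ with hB
  set E := exp ℚ - 1 with hE
  have hBE : B * E = X := bernoulliPowerSeries_mul_exp_sub_one ℚ
  have hEne : E ≠ 0 := fun h => by
    have := congrArg (coeff 1) h
    simp [hE, coeff_exp] at this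
  have hd : (d⁄dX ℚ B) * E + B * (E + 1) = 1 := by
    have h1 : d⁄dX ℚ (B * E) = 1 := by rw [hBE, derivative_X]
    rw [Derivation.leibniz] at h1
    have h2 : d⁄dX ℚ E = exp ℚ := by
      rw [hE, map_sub, exp_deriv, Derivation.map_one_eq_zero, sub_zero]
    rw [smul_eq_mul, smul_eq_mul, h2] at h1
    have h3 : E + 1 = exp ℚ := by rw [hE]; ring
    rw [h3]
    linear_combination h1
  apply mul_right_cancel₀ hEne
  linear_combination (B - 1) * hBE + X * hd

lemma bernoulli_convolution (m : ℕ) :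
    ∑ j ∈ range (m + 2), ((m + 1).choose j : ℚ) * bernoulli j * bernoulli (m + 1 - j)
      = (1 - (m + 1 : ℚ)) * bernoulli (m + 1) - (m + 1 : ℚ) * bernoulli m := by
  have h := congrArg (coeff (m + 1)) bps_sq
  rw [sq, coeff_mul, map_sub, map_sub, coeff_succ_X_mul, coeff_succ_X_mul,
    coeff_derivative] at h
  simp only [bernoulliPowerSeries, coeff_mk, Algebra.algebraMap_self, RingHom.id_apply] at h
  rw [Finset.Nat.sum_antidiagonal_eq_sum_range_succ
    (fun a b => bernoulli a / (Nat.factorial a : ℚ) * (bernoulli b / (Nat.factorial b : ℚ)))] at h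
  have key : ∀ j ∈ range (m + 2), ((m + 1).choose j : ℚ) * bernoulli j * bernoulli (m + 1 - j)
      = ((m + 1)! : ℚ) * (bernoulli j / j ! * (bernoulli (m + 1 - j) / (m + 1 - j)!)) := by
    intro j hj
    rw [mem_range] at hj
    have hjle : j ≤ m + 1 := by omega
    have e : ((m + 1).choose j * j ! * (m + 1 - j)! : ℕ) = (m + 1)! :=
      Nat.choose_mul_factorial_mul_factorial hjle
    have e' : (((m + 1).choose j : ℚ)) * (j ! : ℚ) * ((m + 1 - j)! : ℚ) = ((m + 1)! : ℚ) := by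
      exact_mod_cast congrArg (Nat.cast : ℕ → ℚ) e
    have hj1 : (j ! : ℚ) ≠ 0 := Nat.cast_ne_zero.mpr (Nat.factorial_ne_zero _)
    have hj2 : ((m + 1 - j)! : ℚ) ≠ 0 := Nat.cast_ne_zero.mpr (Nat.factorial_ne_zero _)
    field_simp
    linear_combination bernoulli j * bernoulli (m + 1 - j) * e'
  rw [Finset.sum_congr rfl key, ← Finset.mul_sum, h]
  have h2 : (m ! : ℚ) ≠ 0 := Nat.cast_ne_zero.mpr (Nat.factorial_ne_zero _)
  have h3 : ((m + 1)! : ℚ) = (m + 1) * (m ! : ℚ) := by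
    rw [Nat.factorial_succ]; push_cast; ring
  rw [h3]
  field_simp
  ring

lemma choose_p_sub_one (p : ℕ) (hp : p.Prime) :
    ∀ j, j ≤ p - 1 → (((p - 1).choose j : ℕ) : ZMod p) = (-1 : ZMod p) ^ j := by
  have hp2 := hp.two_le
  intro j
  induction j with
  | zero => simp
  | succ k ih =>
    intro hk
    have hk' : k ≤ p - 1 := by omega
    have h1 : p - 1 + 1 = p := by omega
    have h2 : p.choose (k + 1) = (p - 1).choose k + (p - 1).choose (k + 1) := by
      conv_lhs => rw [← h1]
      exact Nat.choose_succ_succ' (p - 1) k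
    have h3 : p ∣ p.choose (k + 1) :=
      hp.dvd_choose_self (Nat.succ_ne_zero k) (by omega)
    have h4 : ((p.choose (k + 1) : ℕ) : ZMod p) = 0 :=
      (ZMod.natCast_eq_zero_iff _ _).mpr h3
    rw [h2] at h4
    push_cast at h4
    have h5 := ih hk'
    rw [pow_succ]
    linear_combination h4 - h5

lemma sum_range_pow_zmod (p : ℕ) [NeZero p] (j : ℕ) :
    ∑ k ∈ range p, ((k : ZMod p)) ^ j = ∑ x : ZMod p, x ^ j := by
  exact Finset.sum_nbij' (fun k => (k : ZMod p)) (fun x : ZMod p => x.val)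
    (fun a _ => mem_univ _)
    (fun a _ => mem_range.mpr (ZMod.val_lt a))
    (fun a ha => ZMod.val_cast_of_lt (mem_range.mp ha))
    (fun a _ => ZMod.natCast_rightInverse a)
    (fun a _ => rfl)

lemma pow_sum_dvd (p : ℕ) (hp : p.Prime) (j : ℕ) (h1 : 1 ≤ j) (h2 : j < p - 1) :
    (p : ℤ) ∣ ∑ k ∈ range p, (k : ℤ) ^ j := by
  haveI : Fact p.Prime := ⟨hp⟩
  rw [← ZMod.intCast_zmod_eq_zero_iff_dvd]
  push_cast
  rw [sum_range_pow_zmod]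
  exact FiniteField.sum_pow_lt_card_sub_one (ZMod p) j (by rwa [ZMod.card])

lemma pow_sum_p_sub_one (p : ℕ) (hp : p.Prime) :
    (p : ℤ) ∣ (∑ k ∈ range p, (k : ℤ) ^ (p - 1)) + 1 := by
  haveI : Fact p.Prime := ⟨hp⟩
  have hp2 := hp.two_le
  rw [← ZMod.intCast_zmod_eq_zero_iff_dvd]
  push_cast
  rw [sum_range_pow_zmod]
  have h0 : ∑ x : ZMod p, x ^ (p - 1)
      = (∑ x ∈ univ \ {(0 : ZMod p)}, x ^ (p - 1)) + (0 : ZMod p) ^ (p - 1) :=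
    (Finset.sum_eq_sum_sdiff_singleton_add (mem_univ (0 : ZMod p)) _)
  have hz : (0 : ZMod p) ^ (p - 1) = 0 := zero_pow (by omega)
  have hone : ∀ x ∈ univ \ {(0 : ZMod p)}, x ^ (p - 1) = 1 := fun x hx =>
    ZMod.pow_card_sub_one_eq_one (by simpa using hx)
  rw [h0, Finset.sum_congr rfl hone, hz, add_zero, Finset.sum_const,
    Finset.card_sdiff_of_subset (Finset.subset_univ _)]
  simp only [Finset.card_univ, ZMod.card, Finset.card_singleton, smul_eq_mul, mul_one]
  rw [nsmul_eq_mul, mul_one, Nat.cast_sub hp.one_le]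
  simp [ZMod.natCast_self]

lemma padicNorm_pow (p : ℕ) [Fact p.Prime] (q : ℚ) (n : ℕ) : padicNorm p (q ^ n) = padicNorm p q ^ n := by
  induction n with
  | zero => simp [padicNorm.one]
  | succ n ih => rw [pow_succ, pow_succ, padicNorm.mul, ih]

lemma norm_int_le (p : ℕ) [Fact p.Prime] {z : ℤ} (h : (p : ℤ) ∣ z) :
    padicNorm p (z : ℚ) ≤ (p : ℚ)⁻¹ := by
  have h2 : ((p ^ 1 : ℕ) : ℤ) ∣ z := by simpa using h
  have h3 := padicNorm.dvd_iff_norm_le.mp h2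
  simpa [zpow_neg, zpow_one] using h3

lemma bernoulli_int (p : ℕ) (hp : p.Prime) (hp5 : 5 ≤ p) :
    ∀ j, j ≤ p - 3 → padicNorm p (bernoulli j) ≤ 1 := by
  haveI : Fact p.Prime := ⟨hp⟩
  intro j
  induction j using Nat.strong_induction_on with
  | _ j ih =>
    intro hj
    have hF := sum_range_pow p j
    rw [Finset.sum_range_succ] at hF
    have hjne : ((j : ℚ) + 1) ≠ 0 := by positivity
    have hlast : bernoulli j * (((j + 1).choose j : ℕ) : ℚ) * (p : ℚ) ^ (j + 1 - j) / ((j : ℚ) + 1)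
        = bernoulli j * (p : ℚ) := by
      rw [Nat.choose_succ_self_right, show j + 1 - j = 1 from by omega, pow_one]
      push_cast
      field_simp
    rw [hlast] at hF
    have hkey : bernoulli j * (p : ℚ) = (∑ k ∈ range p, (k : ℚ) ^ j)
        - ∑ i ∈ range j,
            bernoulli i * (((j + 1).choose i : ℕ) : ℚ) * (p : ℚ) ^ (j + 1 - i) / ((j : ℚ) + 1) := by
      linear_combination -hF
    have hA : padicNorm p (∑ k ∈ range p, (k : ℚ) ^ j) ≤ (p : ℚ)⁻¹ := by
      rcases Nat.eq_zero_or_pos j with rfl | hj1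
      · simp only [pow_zero, Finset.sum_const, Finset.card_range, nsmul_eq_mul, mul_one]
        exact le_of_eq (padicNorm.padicNorm_p (by omega))
      · have hdvd := pow_sum_dvd p hp j hj1 (by omega)
        have hcast : (∑ k ∈ range p, (k : ℚ) ^ j) = ((∑ k ∈ range p, (k : ℤ) ^ j : ℤ) : ℚ) := by
          push_cast; rfl
        rw [hcast]; exact norm_int_le p hdvd
    have hterm : ∀ i ∈ range j,
        padicNorm p (bernoulli i * (((j + 1).choose i : ℕ) : ℚ) * (p : ℚ) ^ (j + 1 - i) / ((j : ℚ) + 1))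
          ≤ (p : ℚ)⁻¹ := by
      intro i hi
      rw [mem_range] at hi
      have hBi : padicNorm p (bernoulli i) ≤ 1 := ih i hi (by omega)
      have hC : padicNorm p (((j + 1).choose i : ℕ) : ℚ) ≤ 1 := padicNorm.of_nat _
      have hd : padicNorm p ((j : ℚ) + 1) = 1 := by
        have e : ((j : ℚ) + 1) = ((j + 1 : ℕ) : ℚ) := by push_cast; ring
        rw [e, padicNorm.nat_eq_one_iff]
        intro hdvd
        have := Nat.le_of_dvd (by omega) hdvd
        omega
      have hPp : padicNorm p ((p : ℚ) ^ (j + 1 - i)) ≤ (p : ℚ)⁻¹ := by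
        rw [padicNorm_pow, padicNorm.padicNorm_p (by omega)]
        calc ((p : ℚ)⁻¹) ^ (j + 1 - i) ≤ ((p : ℚ)⁻¹) ^ 1 :=
              pow_le_pow_of_le_one (by positivity)
                (inv_le_one_of_one_le₀ (by exact_mod_cast by omega : (1:ℚ) ≤ p)) (by omega)
          _ = (p : ℚ)⁻¹ := pow_one _
      rw [padicNorm.div, padicNorm.mul, padicNorm.mul, hd, div_one]
      calc padicNorm p (bernoulli i) * padicNorm p (((j + 1).choose i : ℕ) : ℚ)
            * padicNorm p ((p : ℚ) ^ (j + 1 - i)) ≤ 1 * 1 * (p : ℚ)⁻¹ := by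
            gcongr <;> first | exact padicNorm.nonneg _ | assumption
        _ = (p : ℚ)⁻¹ := by ring
    have hsum : padicNorm p (∑ i ∈ range j,
        bernoulli i * (((j + 1).choose i : ℕ) : ℚ) * (p : ℚ) ^ (j + 1 - i) / ((j : ℚ) + 1))
          ≤ (p : ℚ)⁻¹ := padicNorm.sum_le' hterm (by positivity)
    have hfin : padicNorm p (bernoulli j * (p : ℚ)) ≤ (p : ℚ)⁻¹ := by
      rw [hkey]; exact le_trans padicNorm.sub (max_le hA hsum)
    rw [padicNorm.mul, padicNorm.padicNorm_p (by omega)] at hfin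
    have hppos : (0 : ℚ) < (p : ℚ)⁻¹ := by positivity
    calc padicNorm p (bernoulli j)
        = padicNorm p (bernoulli j) * (p : ℚ)⁻¹ / (p : ℚ)⁻¹ := by field_simp
      _ ≤ (p : ℚ)⁻¹ / (p : ℚ)⁻¹ := by gcongr
      _ = 1 := by field_simp

lemma p_bernoulli_p_sub_one (p : ℕ) (hp : p.Prime) (hp5 : 5 ≤ p) :
    padicNorm p ((p : ℚ) * bernoulli (p - 1) + 1) ≤ (p : ℚ)⁻¹ := by
  haveI : Fact p.Prime := ⟨hp⟩
  have hpodd : Odd p := hp.odd_of_ne_two (by omega)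
  have hF := sum_range_pow p (p - 1)
  rw [Finset.sum_range_succ] at hF
  have hcastp : ((p - 1 : ℕ) : ℚ) + 1 = (p : ℚ) := by
    rw [Nat.cast_sub hp.one_le]; ring
  have hpne : (p : ℚ) ≠ 0 := by positivity
  have hpinv : (0:ℚ) ≤ (p : ℚ)⁻¹ := by positivity
  have hlast : bernoulli (p - 1) * (((p - 1 + 1).choose (p - 1) : ℕ) : ℚ)
        * (p : ℚ) ^ (p - 1 + 1 - (p - 1)) / (((p - 1 : ℕ) : ℚ) + 1)
      = (p : ℚ) * bernoulli (p - 1) := by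
    rw [Nat.choose_succ_self_right, hcastp, show p - 1 + 1 - (p - 1) = 1 from by omega, pow_one]
    rw [show ((p - 1 + 1 : ℕ) : ℚ) = (p : ℚ) from by push_cast [Nat.cast_sub hp.one_le]; ring]
    field_simp
  rw [hlast, hcastp] at hF
  have hkey : (p : ℚ) * bernoulli (p - 1) = (∑ k ∈ range p, (k : ℚ) ^ (p - 1))
      - ∑ i ∈ range (p - 1),
          bernoulli i * (((p - 1 + 1).choose i : ℕ) : ℚ) * (p : ℚ) ^ (p - 1 + 1 - i) / (p : ℚ) := by
    linear_combination -hF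
  have hterm : ∀ i ∈ range (p - 1),
      padicNorm p (bernoulli i * (((p - 1 + 1).choose i : ℕ) : ℚ)
        * (p : ℚ) ^ (p - 1 + 1 - i) / (p : ℚ)) ≤ (p : ℚ)⁻¹ := by
    intro i hi
    rw [mem_range] at hi
    rcases eq_or_ne i (p - 2) with rfl | hne
    · have hz : bernoulli (p - 2) = 0 :=
        bernoulli_odd_zero (Nat.Odd.sub_even (by omega) hpodd (by norm_num)) (by omega)
      rw [hz]
      simpa [padicNorm.zero] using hpinv
    · have hi3 : i ≤ p - 3 := by omega
      have hBi := bernoulli_int p hp hp5 i hi3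
      have hC : padicNorm p (((p - 1 + 1).choose i : ℕ) : ℚ) ≤ 1 := padicNorm.of_nat _
      have he2 : 2 ≤ p - 1 + 1 - i := by omega
      have hple : ((p:ℚ)⁻¹) ^ (p - 1 + 1 - i) ≤ ((p:ℚ)⁻¹) ^ 2 :=
        pow_le_pow_of_le_one (by positivity)
          (inv_le_one_of_one_le₀ (by exact_mod_cast by omega : (1:ℚ) ≤ p)) he2
      rw [padicNorm.div, padicNorm.mul, padicNorm.mul, padicNorm_pow,
        padicNorm.padicNorm_p (by omega)]
      calc padicNorm p (bernoulli i) * padicNorm p (((p - 1 + 1).choose i : ℕ) : ℚ)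
            * ((p:ℚ)⁻¹) ^ (p - 1 + 1 - i) / (p:ℚ)⁻¹
          ≤ 1 * 1 * ((p:ℚ)⁻¹) ^ 2 / (p:ℚ)⁻¹ := by
            gcongr <;> first | exact padicNorm.nonneg _ | positivity | assumption
        _ = (p:ℚ)⁻¹ := by rw [pow_two]; field_simp
  have hsum : padicNorm p (∑ i ∈ range (p - 1),
      bernoulli i * (((p - 1 + 1).choose i : ℕ) : ℚ) * (p : ℚ) ^ (p - 1 + 1 - i) / (p : ℚ))
        ≤ (p : ℚ)⁻¹ := padicNorm.sum_le' hterm hpinv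
  have hA : padicNorm p ((∑ k ∈ range p, (k : ℚ) ^ (p - 1)) + 1) ≤ (p : ℚ)⁻¹ := by
    have hcast : (∑ k ∈ range p, (k : ℚ) ^ (p - 1)) + 1
        = (((∑ k ∈ range p, (k : ℤ) ^ (p - 1)) + 1 : ℤ) : ℚ) := by push_cast; ring
    rw [hcast]; exact norm_int_le p (pow_sum_p_sub_one p hp)
  have hsplit : (p : ℚ) * bernoulli (p - 1) + 1
      = (-(∑ i ∈ range (p - 1),
          bernoulli i * (((p - 1 + 1).choose i : ℕ) : ℚ) * (p : ℚ) ^ (p - 1 + 1 - i) / (p : ℚ)))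
        + ((∑ k ∈ range p, (k : ℚ) ^ (p - 1)) + 1) := by
    linear_combination hkey
  rw [hsplit]
  refine le_trans padicNorm.nonarchimedean (max_le ?_ hA)
  rw [padicNorm.neg]
  exact hsum

/-- `∑_{j=2}^{p−3} B_j B_{p−1−j} ≡ 1 (mod p)`. -/
theorem bernoulli_convolution_order_p_sub_one (p : ℕ) (hp : p.Prime) (hp5 : 5 ≤ p) :
    ratCongr p 1
      (∑ j ∈ Finset.Icc 2 (p - 3), bernoulli j * bernoulli (p - 1 - j))
      1 := by
  haveI : Fact p.Prime := ⟨hp⟩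
  have hpodd : Odd p := hp.odd_of_ne_two (by omega)
  have hB2 : bernoulli (p - 2) = 0 :=
    bernoulli_odd_zero (Nat.Odd.sub_even (by omega) hpodd (by norm_num)) (by omega)
  have hpinv : (0:ℚ) ≤ (p : ℚ)⁻¹ := by positivity
  have hIcc : Finset.Icc 2 (p - 3) = Finset.Ico 2 (p - 2) := by
    rw [show p - 2 = p - 3 + 1 from by omega, Finset.Ico_add_one_right_eq_Icc]
  -- Step 1: the binomial-weighted sum equals -p * bernoulli (p-1)
  have hconv := bernoulli_convolution (p - 2)
  rw [show p - 2 + 1 = p - 1 from by omega] at hconv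
  rw [show p - 2 + 2 = p - 2 + 1 + 1 from by omega, Finset.sum_range_succ,
    Finset.sum_range_succ, Finset.range_eq_Ico,
    Finset.sum_eq_sum_Ico_succ_bot (show 0 < p - 2 from by omega),
    Finset.sum_eq_sum_Ico_succ_bot (show 0 + 1 < p - 2 from by omega)] at hconv
  rw [show p - 2 + 1 = p - 1 from by omega, show (0:ℕ) + 1 + 1 = 2 from rfl] at hconv
  have hg0 : (((p - 1).choose 0 : ℕ) : ℚ) * bernoulli 0 * bernoulli (p - 1 - 0)
      = bernoulli (p - 1) := by simp
  have hg1 : (((p - 1).choose (0 + 1) : ℕ) : ℚ) * bernoulli (0 + 1) * bernoulli (p - 1 - (0 + 1))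
      = 0 := by rw [show p - 1 - (0 + 1) = p - 2 from by omega, hB2, mul_zero]
  have hgp2 : (((p - 1).choose (p - 2) : ℕ) : ℚ) * bernoulli (p - 2) * bernoulli (p - 1 - (p - 2))
      = 0 := by rw [hB2]; ring
  have hgtop : (((p - 1).choose (p - 1) : ℕ) : ℚ) * bernoulli (p - 1) * bernoulli (p - 1 - (p - 1))
      = bernoulli (p - 1) := by simp [Nat.choose_self, Nat.sub_self]
  rw [hg0, hg1, hgp2, hgtop, hB2] at hconv
  have hcast : ((p - 2 : ℕ) : ℚ) + 1 = (p : ℚ) - 1 := by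
    rw [Nat.cast_sub (by omega)]; push_cast; ring
  have hT : ∑ j ∈ Finset.Ico 2 (p - 2), (((p - 1).choose j : ℕ) : ℚ) * bernoulli j
      * bernoulli (p - 1 - j) = -(p : ℚ) * bernoulli (p - 1) := by
    linear_combination hconv - bernoulli (p - 1) * hcast
  -- Step 2: the unweighted and weighted sums agree mod p
  have hdiff : ∀ j ∈ Finset.Ico 2 (p - 2),
      padicNorm p (bernoulli j * bernoulli (p - 1 - j)
        - (((p - 1).choose j : ℕ) : ℚ) * bernoulli j * bernoulli (p - 1 - j)) ≤ (p : ℚ)⁻¹ := by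
    intro j hj
    rw [Finset.mem_Ico] at hj
    rcases Nat.even_or_odd j with hje | hjo
    · have h1 : bernoulli j * bernoulli (p - 1 - j)
          - (((p - 1).choose j : ℕ) : ℚ) * bernoulli j * bernoulli (p - 1 - j)
          = ((1 - ((p - 1).choose j : ℤ) : ℤ) : ℚ) * bernoulli j * bernoulli (p - 1 - j) := by
        push_cast; ring
      have hdvd : (p : ℤ) ∣ (1 - ((p - 1).choose j : ℤ)) := by
        rw [← ZMod.intCast_zmod_eq_zero_iff_dvd]
        push_cast
        rw [choose_p_sub_one p hp j (by omega), Even.neg_one_pow hje]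
        ring
      rw [h1, padicNorm.mul, padicNorm.mul]
      have hn1 := norm_int_le p hdvd
      have hn2 := bernoulli_int p hp hp5 j (by omega)
      have hn3 := bernoulli_int p hp hp5 (p - 1 - j) (by omega)
      calc padicNorm p ((1 - ((p - 1).choose j : ℤ) : ℤ) : ℚ) * padicNorm p (bernoulli j)
            * padicNorm p (bernoulli (p - 1 - j)) ≤ (p : ℚ)⁻¹ * 1 * 1 := by
            gcongr <;> first | exact padicNorm.nonneg _ | positivity | assumption
        _ = (p : ℚ)⁻¹ := by ring
    · have hz : bernoulli j = 0 := bernoulli_odd_zero hjo (by omega)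
      rw [hz]
      simpa using hpinv
  have hST : padicNorm p
      ((∑ j ∈ Finset.Ico 2 (p - 2), bernoulli j * bernoulli (p - 1 - j))
        - ∑ j ∈ Finset.Ico 2 (p - 2), (((p - 1).choose j : ℕ) : ℚ) * bernoulli j
            * bernoulli (p - 1 - j)) ≤ (p : ℚ)⁻¹ := by
    rw [← Finset.sum_sub_distrib]
    exact padicNorm.sum_le' hdiff hpinv
  -- Final combination
  rw [ratCongr, show (-(1 : ℕ) : ℤ) = -1 from rfl, zpow_neg, zpow_one, hIcc]
  have hsplit : (∑ j ∈ Finset.Ico 2 (p - 2), bernoulli j * bernoulli (p - 1 - j)) - 1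
      = ((∑ j ∈ Finset.Ico 2 (p - 2), bernoulli j * bernoulli (p - 1 - j))
          - ∑ j ∈ Finset.Ico 2 (p - 2), (((p - 1).choose j : ℕ) : ℚ) * bernoulli j
              * bernoulli (p - 1 - j))
        + (-((p : ℚ) * bernoulli (p - 1) + 1)) := by
    linear_combination hT
  rw [hsplit]
  refine le_trans padicNorm.nonarchimedean (max_le hST ?_)
  rw [padicNorm.neg]
  exact p_bernoulli_p_sub_one p hp hp5
end

section
/- Let p ≥ 5 be a prime. Then the Fermat quotient q_2(p) = (2^{p−1} − 1)/p satisfies q_2(p) ≡ 2·N_{p−2} − 1 (mod p). -/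
/-- Number of ascents of a permutation `σ` of `{1,…,k}`: indices `i` (0-based,
`i+1 < k`) with `σ(i+1) > σ(i)`. -/
def ascents (k : ℕ) (σ : Equiv.Perm (Fin k)) : ℕ :=
  (Finset.univ.filter fun i : Fin k =>
    ∃ h : (i : ℕ) + 1 < k, σ i < σ ⟨(i : ℕ) + 1, h⟩).card

/-- `N_k`: the number of permutations of `{1,…,k}` with an even number of ascents. -/
def N (k : ℕ) : ℕ :=
  (Finset.univ.filter fun σ : Equiv.Perm (Fin k) => Even (ascents k σ)).card

open Finset

namespace FermatQuot

variable {k : ℕ}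


/-- the word of a permutation, as a total function on ℕ -/
def wv (k : ℕ) (σ : Equiv.Perm (Fin k)) (i : ℕ) : ℕ :=
  if h : i < k then (σ ⟨i, h⟩ : ℕ) else 0

lemma wv_lt (σ : Equiv.Perm (Fin k)) {i : ℕ} (h : i < k) : wv k σ i < k := by
  simp only [wv, dif_pos h]; exact (σ ⟨i, h⟩).isLt

def ascSet (k : ℕ) (σ : Equiv.Perm (Fin k)) : Finset ℕ :=
  (Finset.range (k - 1)).filter fun i => wv k σ i < wv k σ (i + 1)

lemma mem_ascSet {σ : Equiv.Perm (Fin k)} {i : ℕ} :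
    i ∈ ascSet k σ ↔ i + 1 < k ∧ wv k σ i < wv k σ (i + 1) := by
  simp only [ascSet, mem_filter, mem_range]
  constructor
  · rintro ⟨h1, h2⟩; exact ⟨by omega, h2⟩
  · rintro ⟨h1, h2⟩; exact ⟨by omega, h2⟩

lemma ascents_eq (σ : Equiv.Perm (Fin k)) : ascents k σ = (ascSet k σ).card := by
  classical
  rw [ascents, ← Finset.card_image_of_injective _ Fin.val_injective]
  congr 1
  ext m
  simp only [Finset.mem_image, Finset.mem_filter, Finset.mem_univ, true_and, mem_ascSet]
  constructor
  · rintro ⟨i, ⟨h, hlt⟩, rfl⟩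
    have e1 : wv k σ (i : ℕ) = σ i := by simp [wv, i.isLt]
    have e2 : wv k σ ((i : ℕ) + 1) = σ ⟨(i : ℕ) + 1, h⟩ := by simp [wv, h]
    exact ⟨h, by rw [e1, e2]; exact hlt⟩
  · rintro ⟨h, hlt⟩
    refine ⟨⟨m, by omega⟩, ⟨h, ?_⟩, rfl⟩
    have e1 : wv k σ m = σ ⟨m, by omega⟩ := by simp [wv, show m < k by omega]
    have e2 : wv k σ (m + 1) = σ ⟨m + 1, h⟩ := by simp [wv, h]
    rw [e1, e2] at hlt
    exact hlt

lemma ascents_le (σ : Equiv.Perm (Fin k)) : ascents k σ ≤ k - 1 := by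
  rw [ascents_eq]
  calc (ascSet k σ).card ≤ (Finset.range (k-1)).card := Finset.card_filter_le _ _
    _ = k - 1 := Finset.card_range _

/-- insert a new maximum into the word of `σ` at slot `s` -/
def insMax (σ : Equiv.Perm (Fin k)) (s : Fin (k + 1)) : Equiv.Perm (Fin (k + 1)) :=
  (finSuccEquiv' s).trans ((Equiv.optionCongr σ).trans finSuccEquivLast.symm)

lemma insMax_apply_self (σ : Equiv.Perm (Fin k)) (s : Fin (k+1)) :
    insMax σ s s = Fin.last k := by
  simp [insMax]

lemma insMax_apply_succAbove (σ : Equiv.Perm (Fin k)) (s : Fin (k+1)) (j : Fin k) :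
    insMax σ s (s.succAbove j) = (σ j).castSucc := by
  simp [insMax]


lemma wv_insMax_lt {σ : Equiv.Perm (Fin k)} {s : Fin (k+1)} {i : ℕ} (h : i < (s : ℕ)) :
    wv (k+1) (insMax σ s) i = wv k σ i := by
  have hs := s.isLt
  have hik : i < k := by omega
  have h1 : (⟨i, by omega⟩ : Fin (k+1)) = s.succAbove ⟨i, hik⟩ := by
    rw [Fin.succAbove_of_castSucc_lt]
    · rfl
    · exact Fin.lt_def.mpr (by simpa using h)
  simp only [wv, dif_pos (show i < k+1 by omega), dif_pos hik]
  rw [h1, insMax_apply_succAbove]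
  rfl

lemma wv_insMax_self (σ : Equiv.Perm (Fin k)) (s : Fin (k+1)) :
    wv (k+1) (insMax σ s) (s : ℕ) = k := by
  have hs := s.isLt
  simp only [wv, dif_pos hs]
  have : (⟨(s : ℕ), hs⟩ : Fin (k+1)) = s := by ext; rfl
  rw [this, insMax_apply_self]
  rfl

lemma wv_insMax_gt {σ : Equiv.Perm (Fin k)} {s : Fin (k+1)} {i : ℕ}
    (h : (s : ℕ) < i) (h2 : i ≤ k) :
    wv (k+1) (insMax σ s) i = wv k σ (i - 1) := by
  have hik : i - 1 < k := by omega
  have h1 : (⟨i, by omega⟩ : Fin (k+1)) = s.succAbove ⟨i - 1, hik⟩ := by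
    rw [Fin.succAbove_of_le_castSucc]
    · ext; simp; omega
    · exact Fin.le_def.mpr (by simpa using by omega)
  simp only [wv, dif_pos (show i < k+1 by omega), dif_pos hik]
  rw [h1, insMax_apply_succAbove]
  rfl


lemma ascSet_insMax (σ : Equiv.Perm (Fin k)) (s : Fin (k+1)) :
    ascSet (k+1) (insMax σ s) =
      ((ascSet k σ).filter fun i => i + 1 < (s:ℕ)) ∪
      (((ascSet k σ).filter fun i => (s:ℕ) < i + 1).image (· + 1)) ∪
      (if (s:ℕ) = 0 then ∅ else {(s:ℕ) - 1}) := by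
  have hs := s.isLt
  ext i
  simp only [mem_ascSet, Finset.mem_union, Finset.mem_filter, Finset.mem_image, mem_ascSet]
  constructor
  · rintro ⟨h1, h2⟩
    rcases lt_trichotomy (i+1) (s:ℕ) with hc | hc | hc
    · left; left
      rw [wv_insMax_lt (by omega), wv_insMax_lt (by omega)] at h2
      exact ⟨⟨by omega, h2⟩, hc⟩
    · right
      rw [if_neg (by omega), Finset.mem_singleton]
      omega
    · rcases Nat.lt_or_ge (s:ℕ) i with hc2 | hc2
      · left; right
        refine ⟨i - 1, ⟨⟨by omega, ?_⟩, by omega⟩, by omega⟩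
        rw [wv_insMax_gt (by omega) (by omega), wv_insMax_gt (by omega) (by omega)] at h2
        have e : i + 1 - 1 = (i - 1) + 1 := by omega
        rwa [e] at h2
      · -- i = s: impossible, word value k at i but value at i+1 is < k
        exfalso
        have hi : i = (s:ℕ) := by omega
        rw [hi, wv_insMax_self] at h2
        rw [wv_insMax_gt (by omega) (by omega)] at h2
        have := wv_lt σ (show (s:ℕ)+1-1 < k by omega) (i := (s:ℕ)+1-1)
        omega
  · rintro ((⟨⟨hi1, hlt⟩, his⟩ | ⟨j, ⟨⟨hj1, hjlt⟩, hsj⟩, rfl⟩) | hite)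
    · refine ⟨by omega, ?_⟩
      rw [wv_insMax_lt (by omega), wv_insMax_lt (by omega)]
      exact hlt
    · refine ⟨by omega, ?_⟩
      rw [wv_insMax_gt (by omega) (by omega), wv_insMax_gt (by omega) (by omega)]
      have e1 : j + 1 - 1 = j := by omega
      have e2 : j + 1 + 1 - 1 = j + 1 := by omega
      rw [e1, e2]
      exact hjlt
    · rcases Nat.eq_zero_or_pos (s:ℕ) with h0 | h0
      · rw [if_pos h0] at hite; exact absurd hite (Finset.notMem_empty _)
      · rw [if_neg (by omega), Finset.mem_singleton] at hite
        subst hite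
        have he : (s:ℕ) - 1 + 1 = (s:ℕ) := by omega
        refine ⟨by omega, ?_⟩
        rw [he, wv_insMax_self, wv_insMax_lt (by omega)]
        exact wv_lt σ (by omega)


def Keep (σ : Equiv.Perm (Fin k)) (s : Fin (k+1)) : Prop :=
  (s : ℕ) = 0 ∨ (s : ℕ) - 1 ∈ ascSet k σ

instance (σ : Equiv.Perm (Fin k)) (s : Fin (k+1)) : Decidable (Keep σ s) := by
  unfold Keep; infer_instance

lemma ascents_insMax (σ : Equiv.Perm (Fin k)) (s : Fin (k+1)) :
    ascents (k+1) (insMax σ s) = ascents k σ + (if Keep σ s then 0 else 1) := by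
  have hs := s.isLt
  rw [ascents_eq, ascents_eq, ascSet_insMax]
  -- disjointness
  have d1 : Disjoint ((ascSet k σ).filter fun i => i + 1 < (s:ℕ))
      (((ascSet k σ).filter fun i => (s:ℕ) < i + 1).image (· + 1)) := by
    rw [Finset.disjoint_left]
    rintro a ha hb
    simp only [Finset.mem_filter, Finset.mem_image] at ha hb
    obtain ⟨j, ⟨_, hj⟩, rfl⟩ := hb
    omega
  have d2 : Disjoint
      (((ascSet k σ).filter fun i => i + 1 < (s:ℕ)) ∪
        ((ascSet k σ).filter fun i => (s:ℕ) < i + 1).image (· + 1))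
      (if (s:ℕ) = 0 then (∅ : Finset ℕ) else {(s:ℕ) - 1}) := by
    rcases Nat.eq_zero_or_pos (s:ℕ) with h0 | h0
    · rw [if_pos h0]; exact Finset.disjoint_empty_right _
    · rw [if_neg (by omega), Finset.disjoint_right]
      intro a ha
      rw [Finset.mem_singleton] at ha
      subst ha
      simp only [Finset.mem_union, Finset.mem_filter, Finset.mem_image, not_or]
      constructor
      · rintro ⟨_, h⟩; omega
      · rintro ⟨j, ⟨_, hj⟩, hje⟩; omega
  rw [Finset.card_union_of_disjoint d2, Finset.card_union_of_disjoint d1,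
    Finset.card_image_of_injective _ (add_left_injective 1)]
  -- partition of ascSet k σ into three filters
  have hpart1 := Finset.card_filter_add_card_filter_not
    (s := ascSet k σ) (p := fun i => i + 1 < (s:ℕ))
  have hpart2 := Finset.card_filter_add_card_filter_not
    (s := (ascSet k σ).filter (fun i => ¬ (i + 1 < (s:ℕ)))) (p := fun i => i + 1 = (s:ℕ))
  have e1 : ((ascSet k σ).filter (fun i => ¬ (i + 1 < (s:ℕ)))).filter (fun i => i + 1 = (s:ℕ))
      = (ascSet k σ).filter (fun i => i + 1 = (s:ℕ)) := by
    rw [Finset.filter_filter]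
    apply Finset.filter_congr
    intro x _
    constructor
    · rintro ⟨_, h⟩; exact h
    · intro h; exact ⟨by omega, h⟩
  have e2 : ((ascSet k σ).filter (fun i => ¬ (i + 1 < (s:ℕ)))).filter (fun i => ¬ (i + 1 = (s:ℕ)))
      = (ascSet k σ).filter (fun i => (s:ℕ) < i + 1) := by
    rw [Finset.filter_filter]
    apply Finset.filter_congr
    intro x _
    constructor
    · rintro ⟨h1, h2⟩; omega
    · intro h; omega
  rw [e1, e2] at hpart2
  -- middle filter card
  have hmid : ((ascSet k σ).filter (fun i => i + 1 = (s:ℕ))).card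
      = if (s:ℕ) ≠ 0 ∧ (s:ℕ) - 1 ∈ ascSet k σ then 1 else 0 := by
    split_ifs with hc
    · have : (ascSet k σ).filter (fun i => i + 1 = (s:ℕ)) = {(s:ℕ) - 1} := by
        ext a
        simp only [Finset.mem_filter, Finset.mem_singleton]
        constructor
        · rintro ⟨_, h⟩; omega
        · rintro rfl
          exact ⟨hc.2, by omega⟩
      rw [this, Finset.card_singleton]
    · rw [Finset.card_eq_zero, Finset.filter_eq_empty_iff]
      intro a ha
      intro h
      apply hc
      constructor
      · omega
      · have : a = (s:ℕ) - 1 := by omega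
        rwa [← this]
  -- third piece card
  rcases Nat.eq_zero_or_pos (s:ℕ) with h0 | h0
  · rw [if_pos h0]
    have hk : Keep σ s := Or.inl h0
    rw [if_pos hk]
    simp only [Finset.card_empty]
    rw [hmid, if_neg (by rintro ⟨h, _⟩; omega)] at hpart2
    omega
  · rw [if_neg (by omega), Finset.card_singleton]
    by_cases hmem : (s:ℕ) - 1 ∈ ascSet k σ
    · have hk : Keep σ s := Or.inr hmem
      rw [if_pos hk]
      rw [hmid] at hpart2
      rw [if_pos (⟨by omega, hmem⟩ : (s:ℕ) ≠ 0 ∧ (s:ℕ) - 1 ∈ ascSet k σ)] at hpart2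
      omega
    · have hk : ¬ Keep σ s := by
        rintro (h | h)
        · omega
        · exact hmem h
      rw [if_neg hk]
      rw [hmid, if_neg (by rintro ⟨_, h⟩; exact hmem h)] at hpart2
      omega


lemma card_keep (σ : Equiv.Perm (Fin k)) :
    ((Finset.univ : Finset (Fin (k+1))).filter fun s => Keep σ s).card = ascents k σ + 1 := by
  rw [ascents_eq, ← Finset.card_image_of_injective _ Fin.val_injective]
  have himg : ((Finset.univ : Finset (Fin (k+1))).filter fun s => Keep σ s).image Fin.val
      = insert 0 ((ascSet k σ).image (· + 1)) := by
    ext m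
    simp only [Finset.mem_image, Finset.mem_filter, Finset.mem_univ, true_and,
      Finset.mem_insert]
    constructor
    · rintro ⟨s, hK, rfl⟩
      rcases hK with h | h
      · left; exact h
      · by_cases h0 : (s : ℕ) = 0
        · left; exact h0
        · right; exact ⟨(s:ℕ) - 1, h, by omega⟩
    · rintro (rfl | ⟨j, hj, rfl⟩)
      · exact ⟨0, Or.inl rfl, rfl⟩
      · have hjk : j + 1 < k := (mem_ascSet.1 hj).1
        refine ⟨⟨j + 1, by omega⟩, Or.inr ?_, rfl⟩
        simpa using hj
  rw [himg, Finset.card_insert_of_notMem (by simp),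
    Finset.card_image_of_injective _ (add_left_injective 1)]

lemma insMax_bijective (k : ℕ) :
    Function.Bijective (fun x : Equiv.Perm (Fin k) × Fin (k+1) => insMax x.1 x.2) := by
  rw [Fintype.bijective_iff_injective_and_card]
  constructor
  · rintro ⟨σ, s⟩ ⟨σ', s'⟩ h
    simp only at h
    have hs : s = s' := by
      have h1 : insMax σ s s = Fin.last k := insMax_apply_self σ s
      have h2 : insMax σ s s' = Fin.last k := by rw [h]; exact insMax_apply_self σ' s'
      exact (insMax σ s).injective (h1.trans h2.symm)
    subst hs
    have hσ : σ = σ' := by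
      apply Equiv.ext
      intro j
      have h1 := insMax_apply_succAbove σ s j
      have h2 := insMax_apply_succAbove σ' s j
      rw [h] at h1
      rw [h1] at h2
      exact Fin.castSucc_injective _ h2
    rw [hσ]
  · rw [Fintype.card_prod, Fintype.card_perm, Fintype.card_perm, Fintype.card_fin,
      Fintype.card_fin, Nat.factorial_succ, mul_comm]

lemma choose_identity (n k i : ℕ) (h : i ≤ k) :
    (i+1) * (n+i).choose (k+1) + (k-i) * ((n+i)+1).choose (k+1) = n * (n+i).choose k := by
  rw [Nat.choose_succ_succ]
  by_cases hm : k ≤ n + i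
  · have h1 : (n+i).choose (k+1) * (k+1) = (n+i).choose k * (n+i-k) :=
      Nat.choose_succ_right_eq _ _
    calc (i+1) * (n+i).choose (k+1) + (k-i) * ((n+i).choose k + (n+i).choose (k+1))
        = ((i+1) + (k-i)) * (n+i).choose (k+1) + (k-i) * (n+i).choose k := by ring
      _ = (n+i).choose (k+1) * (k+1) + (k-i) * (n+i).choose k := by
          rw [show i+1+(k-i) = k+1 by omega, mul_comm]
      _ = (n+i).choose k * (n+i-k) + (k-i) * (n+i).choose k := by rw [h1]
      _ = ((n+i-k) + (k-i)) * (n+i).choose k := by ring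
      _ = n * (n+i).choose k := by rw [show n+i-k+(k-i) = n by omega]
  · have h0 : (n+i).choose k = 0 := Nat.choose_eq_zero_of_lt (by omega)
    have h1 : (n+i).choose (k+1) = 0 := Nat.choose_eq_zero_of_lt (by omega)
    simp [h0, h1]

theorem worpitzky (k n : ℕ) :
    (∑ σ : Equiv.Perm (Fin k), (n + ascents k σ).choose k) = n ^ k := by
  induction k with
  | zero =>
    rw [Finset.sum_congr rfl (fun σ _ => Nat.choose_zero_right _), Finset.sum_const,
      Finset.card_univ, Fintype.card_perm]
    simp
  | succ k ih =>
    have hbij := insMax_bijective k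
    have hsum := Fintype.sum_bijective _ hbij
      (fun x : Equiv.Perm (Fin k) × Fin (k+1) => (n + ascents (k+1) (insMax x.1 x.2)).choose (k+1))
      (fun τ : Equiv.Perm (Fin (k+1)) => (n + ascents (k+1) τ).choose (k+1))
      (fun x => rfl)
    rw [← hsum, Fintype.sum_prod_type]
    have hrow : ∀ σ : Equiv.Perm (Fin k),
        (∑ s : Fin (k+1), (n + ascents (k+1) (insMax σ s)).choose (k+1))
          = n * (n + ascents k σ).choose k := by
      intro σ
      have hstep : ∀ s : Fin (k+1),
          (n + ascents (k+1) (insMax σ s)).choose (k+1)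
            = if Keep σ s then (n + ascents k σ).choose (k+1)
              else (n + ascents k σ + 1).choose (k+1) := by
        intro s
        rw [ascents_insMax]
        by_cases h : Keep σ s <;> simp [h, ← Nat.add_assoc]
      rw [Finset.sum_congr rfl (fun s _ => hstep s), Finset.sum_ite, Finset.sum_const,
        Finset.sum_const, smul_eq_mul, smul_eq_mul, card_keep]
      have hcard : ((Finset.univ : Finset (Fin (k+1))).filter fun s => Keep σ s).card
          + ((Finset.univ : Finset (Fin (k+1))).filter fun s => ¬ Keep σ s).card = k + 1 := by
        rw [Finset.card_filter_add_card_filter_not, Finset.card_univ, Fintype.card_fin]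
      rw [card_keep] at hcard
      have ha : ascents k σ ≤ k := le_trans (ascents_le σ) (by omega)
      have hneg : ((Finset.univ : Finset (Fin (k+1))).filter fun s => ¬ Keep σ s).card
          = k - ascents k σ := by omega
      rw [hneg]
      exact choose_identity n k (ascents k σ) ha
    rw [Finset.sum_congr rfl (fun σ _ => hrow σ), ← Finset.mul_sum, ih, pow_succ, mul_comm]

-- B1: binomial coefficients of p-1 alternate mod p
lemma choose_p_sub_one {p : ℕ} (hp : p.Prime) [Fact p.Prime] {j : ℕ} (hj : j < p) :
    (((p-1).choose j : ℕ) : ZMod p) = (-1)^j := by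
  induction j with
  | zero => simp
  | succ j ih =>
    have hj' : j < p := by omega
    have hι := Nat.choose_succ_right_eq (p-1) j
    have hcast : (((p-1).choose (j+1) * (j+1) : ℕ) : ZMod p)
        = (((p-1).choose j * (p-1-j) : ℕ) : ZMod p) := by rw [hι]
    push_cast at hcast
    rw [ih hj'] at hcast
    have hp2 : 2 ≤ p := hp.two_le
    have hsub : ((p-1-j : ℕ) : ZMod p) = -((j+1 : ℕ) : ZMod p) := by
      have : ((p-1-j) + (j+1) : ℕ) = p := by omega
      have h2 : (((p-1-j) + (j+1) : ℕ) : ZMod p) = 0 := by rw [this]; exact ZMod.natCast_self p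
      push_cast at h2 ⊢
      linear_combination h2
    push_cast at hsub
    rw [hsub] at hcast
    have hju : ((j : ZMod p) + 1) ≠ 0 := by
      have : (((j+1 : ℕ)) : ZMod p) ≠ 0 := by
        rw [Ne, ZMod.natCast_eq_zero_iff]
        intro hdvd
        have := Nat.le_of_dvd (by omega) hdvd
        omega
      push_cast at this
      exact this
    have hgoal : (((p-1).choose (j+1) : ℕ) : ZMod p) * ((j : ZMod p)+1)
        = (-1)^(j+1) * ((j : ZMod p)+1) := by
      push_cast
      push_cast at hcast
      rw [pow_succ]
      linear_combination hcast
    exact mul_right_cancel₀ hju hgoal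


lemma S_sum {p : ℕ} (hp : p.Prime) [Fact p.Prime] (hp5 : 5 ≤ p) {i : ℕ} (hi : i ≤ p - 3) :
    (∑ j ∈ Finset.range ((p-1)/2), (((2*j+1+i).choose (p-2) : ℕ) : ZMod p)) = (-1)^i := by
  have hodd : p % 2 = 1 := (Nat.Prime.eq_two_or_odd hp).resolve_left (by omega)
  -- generic vanishing fact
  have hvan : ∀ m : ℕ, m < p - 2 ∨ (p ≤ m ∧ m - (p-2) < p) → ((m.choose (p-2) : ℕ) : ZMod p) = 0 := by
    intro m hm
    rcases hm with hm | ⟨hm1, hm2⟩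
    · rw [Nat.choose_eq_zero_of_lt hm]; simp
    · rw [ZMod.natCast_eq_zero_iff]
      exact Nat.Prime.dvd_choose hp (by omega) hm2 hm1
  rcases Nat.even_or_odd i with hpar | hpar
  · -- i even, peak at 2j+1+i = p-2, value 1
    obtain ⟨t, ht⟩ := hpar
    have hj0 : (p-3-i)/2 < (p-1)/2 := by omega
    rw [Finset.sum_eq_single ((p-3-i)/2)]
    · rw [show 2*((p-3-i)/2)+1+i = p-2 by omega, Nat.choose_self]
      simp [Even.neg_one_pow ⟨t, ht⟩]
    · intro j hj hne
      rw [Finset.mem_range] at hj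
      apply hvan
      set m := 2*j+1+i with hm
      rcases Nat.lt_or_ge m (p-2) with h | h
      · left; exact h
      · right
        constructor
        · -- m ≥ p - 2, m ≠ p-2 (else j = j0), m ≠ p-1 (parity)
          rcases Nat.eq_or_lt_of_le h with he | h2
          · omega
          · rcases Nat.eq_or_lt_of_le h2 with he2 | h3
            · omega
            · omega
        · omega
    · intro habs
      exact absurd (Finset.mem_range.mpr hj0) habs
  · -- i odd, peak at 2j+1+i = p-1, value p-1 ≡ -1
    obtain ⟨t, ht⟩ := hpar
    have hj0 : (p-2-i)/2 < (p-1)/2 := by omega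
    rw [Finset.sum_eq_single ((p-2-i)/2)]
    · rw [show 2*((p-2-i)/2)+1+i = p-1 by omega]
      have hch : (p-1).choose (p-2) = p-1 := by
        have h1 : (p-1).choose (p-1-1) = (p-1).choose 1 := Nat.choose_symm (by omega)
        rw [show p-2 = p-1-1 by omega, h1, Nat.choose_one_right]
      rw [hch]
      have : ((p-1 : ℕ) : ZMod p) = -1 := by
        have h2 : (((p-1) + 1 : ℕ) : ZMod p) = 0 := by
          rw [show p-1+1 = p by omega]; exact ZMod.natCast_self p
        push_cast at h2
        linear_combination h2
      rw [this, Odd.neg_one_pow ⟨t, ht⟩]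
    · intro j hj hne
      rw [Finset.mem_range] at hj
      apply hvan
      set m := 2*j+1+i with hm
      rcases Nat.lt_or_ge m (p-2) with h | h
      · left; exact h
      · right; omega
    · intro habs
      exact absurd (Finset.mem_range.mpr hj0) habs


lemma choose_p_eq {p : ℕ} (hp : p.Prime) [Fact p.Prime] (hp5 : 5 ≤ p) {j : ℕ} (hj : j < p - 1) :
    ((p.choose (j+1) : ℕ) : ZMod (p^2))
      = (p : ZMod (p^2)) * ((-1)^j * ((j+1 : ℕ) : ZMod (p^2))^(p-2)) := by
  have hndvd : ¬ p ∣ (j+1) := by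
    intro hdvd
    have := Nat.le_of_dvd (by omega) hdvd
    omega
  have hunit : IsUnit ((j+1 : ℕ) : ZMod (p^2)) := by
    rw [ZMod.isUnit_iff_coprime]
    exact Nat.Coprime.pow_right 2 (Nat.Coprime.symm ((hp.coprime_iff_not_dvd).mpr hndvd))
  apply hunit.mul_left_cancel
  -- the Nat identity (j+1) * C(p, j+1) = p * C(p-1, j)
  have hnat : (j+1) * p.choose (j+1) = p * (p-1).choose j := by
    have h := Nat.add_one_mul_choose_eq (p-1) j
    rw [show p - 1 + 1 = p by omega] at h
    rw [mul_comm]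
    exact h.symm
  have f1 : ((j+1 : ℕ) : ZMod (p^2)) * ((p.choose (j+1) : ℕ) : ZMod (p^2))
      = (p : ZMod (p^2)) * (((p-1).choose j : ℕ) : ZMod (p^2)) := by
    have := congrArg (Nat.cast : ℕ → ZMod (p^2)) hnat
    push_cast at this
    push_cast
    linear_combination this
  obtain ⟨c, hc⟩ : (p:ℤ) ∣ ((p-1).choose j : ℤ) - (-1)^j := by
    rw [← ZMod.intCast_zmod_eq_zero_iff_dvd]
    push_cast
    rw [choose_p_sub_one hp (show j < p by omega)]
    ring
  obtain ⟨d, hd⟩ : (p:ℤ) ∣ ((j+1 : ℕ) : ℤ)^(p-1) - 1 := by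
    rw [← ZMod.intCast_zmod_eq_zero_iff_dvd]
    have hne : ((j+1 : ℕ) : ZMod p) ≠ 0 := by
      rw [Ne, ZMod.natCast_eq_zero_iff]
      exact hndvd
    have hfer := ZMod.pow_card_sub_one_eq_one hne
    push_cast at hfer ⊢
    rw [hfer]
    ring
  have f2 : (((p-1).choose j : ℕ) : ZMod (p^2))
      = (-1)^j + (p : ZMod (p^2)) * ((c : ℤ) : ZMod (p^2)) := by
    have := congrArg (Int.cast : ℤ → ZMod (p^2)) hc
    push_cast at this
    linear_combination this
  have f3 : ((j+1 : ℕ) : ZMod (p^2))^(p-2) * ((j+1 : ℕ) : ZMod (p^2))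
      = 1 + (p : ZMod (p^2)) * ((d : ℤ) : ZMod (p^2)) := by
    have := congrArg (Int.cast : ℤ → ZMod (p^2)) hd
    push_cast at this
    rw [show p - 1 = (p-2)+1 by omega, pow_succ _ (p-2)] at this
    push_cast
    linear_combination this
  have f4 : (p : ZMod (p^2)) * (p : ZMod (p^2)) = 0 := by
    rw [← Nat.cast_mul, ← pow_two, ZMod.natCast_self]
  push_cast at f1 f2 f3 ⊢
  linear_combination f1 + (p : ZMod (p^2)) * f2 - ((p : ZMod (p^2)) * (-1)^j) * f3
    + (((c : ℤ) : ZMod (p^2)) - (-1)^j * ((d : ℤ) : ZMod (p^2))) * f4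

lemma key_congruence {p : ℕ} (hp : p.Prime) [Fact p.Prime] (hp5 : 5 ≤ p) :
    ((2^p - 2 : ℤ) : ZMod (p^2))
      = (p : ZMod (p^2)) *
        ((∑ j ∈ Finset.range (p-1), (-1)^j * ((j+1:ℕ):ℤ)^(p-2) : ℤ) : ZMod (p^2)) := by
  have hpp : p - 1 + 1 = p := by omega
  have h0 : (∑ m ∈ Finset.range (p+1), (p.choose m : ℤ)) = 2^p := by
    have h := congrArg (Nat.cast : ℕ → ℤ) (Nat.sum_range_choose p)
    push_cast at h
    exact h
  rw [Finset.sum_range_succ'] at h0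
  have h1 := Finset.sum_range_succ (fun j => (p.choose (j+1) : ℤ)) (p-1)
  rw [hpp] at h1
  rw [h1, Nat.choose_self, Nat.choose_zero_right] at h0
  have h2 : (2^p - 2 : ℤ) = ∑ j ∈ Finset.range (p-1), (p.choose (j+1):ℤ) := by push_cast at h0 ⊢; linarith
  rw [h2]
  push_cast
  rw [Finset.mul_sum]
  apply Finset.sum_congr rfl
  intro j hj
  rw [Finset.mem_range] at hj
  have hcp := choose_p_eq hp hp5 hj
  push_cast at hcp ⊢
  linear_combination hcp


lemma perm_sum {R : Type*} [CommRing R] (k : ℕ) :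
    (∑ σ : Equiv.Perm (Fin k), (-1 : R)^(ascents k σ))
      = 2 * (N k : R) - (k.factorial : R) := by
  classical
  rw [← Finset.sum_filter_add_sum_filter_not Finset.univ (fun σ => Even (ascents k σ))]
  rw [Finset.sum_congr rfl (fun σ hσ => Even.neg_one_pow ((Finset.mem_filter.1 hσ).2)),
    Finset.sum_congr rfl (fun σ hσ =>
      Odd.neg_one_pow (Nat.not_even_iff_odd.mp ((Finset.mem_filter.1 hσ).2)))]
  rw [Finset.sum_const, Finset.sum_const]
  have hcards := Finset.card_filter_add_card_filter_not
    (s := (Finset.univ : Finset (Equiv.Perm (Fin k)))) (p := fun σ => Even (ascents k σ))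
  rw [Finset.card_univ, Fintype.card_perm, Fintype.card_fin] at hcards
  have hc := congrArg (Nat.cast : ℕ → R) hcards
  push_cast at hc
  have hN : ((Finset.univ.filter fun σ : Equiv.Perm (Fin k) => Even (ascents k σ)).card : R)
      = (N k : R) := by rw [N]
  rw [nsmul_eq_mul, nsmul_eq_mul]
  rw [hN] at hc ⊢
  linear_combination -hc

lemma fact_p_sub_two {p : ℕ} (hp : p.Prime) [Fact p.Prime] (hp5 : 5 ≤ p) :
    (((p-2).factorial : ℕ) : ZMod p) = 1 := by
  have hw := ZMod.wilsons_lemma p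
  have h1 : (p-1).factorial = (p-1) * (p-2).factorial := by
    rw [show p-1 = (p-2)+1 by omega, Nat.factorial_succ]
  rw [h1] at hw
  push_cast at hw
  have hm1 : ((p-1 : ℕ) : ZMod p) = -1 := by
    have h2 : (((p-1) + 1 : ℕ) : ZMod p) = 0 := by
      rw [show p-1+1 = p by omega]; exact ZMod.natCast_self p
    push_cast at h2
    linear_combination h2
  rw [hm1] at hw
  linear_combination -hw

lemma sum_pow_all {p : ℕ} (hp : p.Prime) [Fact p.Prime] (hp5 : 5 ≤ p) :
    (∑ j ∈ Finset.range (p-1), ((j+1 : ℕ) : ZMod p)^(p-2)) = 0 := by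
  have hpp : p - 1 + 1 = p := by omega
  have h1 : (∑ j ∈ Finset.range p, ((j : ℕ) : ZMod p)^(p-2)) = ∑ x : ZMod p, x^(p-2) := by
    apply Finset.sum_nbij' (fun j => ((j : ℕ) : ZMod p)) (fun x => x.val)
    · intro a _; exact Finset.mem_univ _
    · intro x _
      exact Finset.mem_range.mpr (ZMod.val_lt x)
    · intro a ha
      rw [Finset.mem_range] at ha
      exact ZMod.val_cast_of_lt ha
    · intro x _
      exact ZMod.natCast_rightInverse x
    · intro a _; rfl
  have h2 := Finset.sum_range_succ' (fun j => ((j:ℕ) : ZMod p)^(p-2)) (p-1)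
  rw [hpp] at h2
  have h3 : ∑ x : ZMod p, x^(p-2) = 0 := by
    apply FiniteField.sum_pow_lt_card_sub_one
    rw [ZMod.card]
    omega
  rw [h2, h3] at h1
  have h4 : (((0:ℕ) : ZMod p))^(p-2) = 0 := by
    rw [Nat.cast_zero]
    exact zero_pow (by omega)
  rw [h4, add_zero] at h1
  exact h1

lemma parity_split {p : ℕ} (hp : p.Prime) [Fact p.Prime] (hp5 : 5 ≤ p) :
    (∑ j ∈ Finset.range (p-1), (-1 : ZMod p)^j * ((j+1:ℕ) : ZMod p)^(p-2))
      = 2 * ∑ i ∈ Finset.range ((p-1)/2), ((2*i+1 : ℕ) : ZMod p)^(p-2) := by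
  have hodd : p % 2 = 1 := (Nat.Prime.eq_two_or_odd hp).resolve_left (by omega)
  set g : ℕ → ZMod p := fun j => ((j+1:ℕ) : ZMod p)^(p-2) with hg
  have heven : (∑ j ∈ (Finset.range (p-1)).filter (fun j => Even j), g j)
      = ∑ i ∈ Finset.range ((p-1)/2), g (2*i) := by
    apply Finset.sum_nbij' (fun j => j / 2) (fun i => 2 * i)
    · intro a ha
      simp only [Finset.mem_filter, Finset.mem_range] at ha
      obtain ⟨h1, t, ht⟩ := ha
      rw [Finset.mem_range]
      omega
    · intro i hi
      rw [Finset.mem_range] at hi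
      simp only [Finset.mem_filter, Finset.mem_range]
      exact ⟨by omega, ⟨i, by omega⟩⟩
    · intro a ha
      simp only [Finset.mem_filter, Finset.mem_range] at ha
      obtain ⟨h1, t, ht⟩ := ha
      omega
    · intro i _; omega
    · intro a ha
      simp only [Finset.mem_filter, Finset.mem_range] at ha
      obtain ⟨h1, t, ht⟩ := ha
      congr 1
      omega
  have hsplit := Finset.sum_filter_add_sum_filter_not (Finset.range (p-1))
    (fun j => Even j) (fun j => (-1 : ZMod p)^j * g j)
  have hsplit2 := Finset.sum_filter_add_sum_filter_not (Finset.range (p-1))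
    (fun j => Even j) g
  have he1 : (∑ j ∈ (Finset.range (p-1)).filter (fun j => Even j), (-1 : ZMod p)^j * g j)
      = ∑ j ∈ (Finset.range (p-1)).filter (fun j => Even j), g j := by
    apply Finset.sum_congr rfl
    intro j hj
    rw [Finset.mem_filter] at hj
    rw [Even.neg_one_pow hj.2, one_mul]
  have he2 : (∑ j ∈ (Finset.range (p-1)).filter (fun j => ¬ Even j), (-1 : ZMod p)^j * g j)
      = - ∑ j ∈ (Finset.range (p-1)).filter (fun j => ¬ Even j), g j := by
    rw [← Finset.sum_neg_distrib]
    apply Finset.sum_congr rfl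
    intro j hj
    rw [Finset.mem_filter] at hj
    rw [Odd.neg_one_pow (Nat.not_even_iff_odd.mp hj.2)]
    ring
  have hall : (∑ j ∈ Finset.range (p-1), g j) = 0 := sum_pow_all hp hp5
  rw [he1, he2] at hsplit
  rw [← hsplit, heven]
  rw [hall] at hsplit2
  rw [heven] at hsplit2
  linear_combination -hsplit2

lemma odd_sum_eq {p : ℕ} (hp : p.Prime) [Fact p.Prime] (hp5 : 5 ≤ p) :
    (∑ i ∈ Finset.range ((p-1)/2), ((2*i+1 : ℕ) : ZMod p)^(p-2))
      = ∑ σ : Equiv.Perm (Fin (p-2)), (-1 : ZMod p)^(ascents (p-2) σ) := by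
  have step1 : ∀ i : ℕ, ((2*i+1 : ℕ) : ZMod p)^(p-2)
      = ∑ σ : Equiv.Perm (Fin (p-2)), (((2*i+1) + ascents (p-2) σ).choose (p-2) : ZMod p) := by
    intro i
    have hw := congrArg (Nat.cast : ℕ → ZMod p) (worpitzky (p-2) (2*i+1))
    push_cast at hw ⊢
    exact hw.symm
  rw [Finset.sum_congr rfl (fun i _ => step1 i), Finset.sum_comm]
  apply Finset.sum_congr rfl
  intro σ _
  have ha : ascents (p-2) σ ≤ p - 3 := by
    have := ascents_le σ
    omega
  exact S_sum hp hp5 ha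


end FermatQuot


open FermatQuot in
/-- Result 2: the Fermat quotient `q_2(p) = (2^{p−1}−1)/p` satisfies
`q_2(p) ≡ 2N_{p−2} − 1 (mod p)`. -/
theorem fermat_quotient_eq_two_N_sub_one (p : ℕ) (hp : p.Prime) (hp5 : 5 ≤ p) :
    (p : ℤ) ∣ ((2 ^ (p - 1) - 1) / p - (2 * (N (p - 2) : ℤ) - 1)) := by
  haveI : Fact p.Prime := ⟨hp⟩
  have hp0 : (p : ℤ) ≠ 0 := by positivity
  -- the alternating sum over ℤ
  set Bint : ℤ := ∑ j ∈ Finset.range (p-1), (-1)^j * ((j+1:ℕ):ℤ)^(p-2) with hBint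
  -- mod p value of Bint
  have hBmodp : ((Bint : ℤ) : ZMod p) = 2 * (2 * (N (p-2) : ZMod p) - 1) := by
    rw [hBint]
    push_cast
    have hcongr : ∀ j ∈ Finset.range (p-1),
        ((-1 : ZMod p))^j * ((j : ZMod p)+1)^(p-2)
          = (-1 : ZMod p)^j * (((j+1 : ℕ)) : ZMod p)^(p-2) := by
      intro j _; push_cast; ring
    rw [Finset.sum_congr rfl hcongr, parity_split hp hp5, odd_sum_eq hp hp5, perm_sum,
      fact_p_sub_two hp hp5]
  have hdvd1 : (p:ℤ) ∣ Bint - 2*(2*(N (p-2) :ℤ) - 1) := by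
    rw [← ZMod.intCast_zmod_eq_zero_iff_dvd]
    push_cast
    push_cast at hBmodp
    rw [hBmodp]
    ring
  -- mod p^2
  have hkey : ((p:ℤ))^2 ∣ (2^p - 2) - p * Bint := by
    have hz : (((2^p - 2) - (p:ℤ) * Bint : ℤ) : ZMod (p^2)) = 0 := by
      have hk := key_congruence hp hp5
      rw [← hBint] at hk
      push_cast at hk ⊢
      rw [hk]
      ring
    have hd := (ZMod.intCast_zmod_eq_zero_iff_dvd _ (p^2)).mp hz
    push_cast at hd
    exact hd
  have hmul : ((p:ℤ))^2 ∣ p * (Bint - 2*(2*(N (p-2) : ℤ)-1)) := by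
    rw [pow_two]
    exact mul_dvd_mul_left _ hdvd1
  have h2 : ((p:ℤ))^2 ∣ (2^p - 2) - p * (2*(2*(N (p-2) : ℤ)-1)) := by
    have heq : (2^p - 2 : ℤ) - p * (2*(2*(N (p-2) : ℤ)-1))
        = ((2^p - 2) - p * Bint) + (p * (Bint - 2*(2*(N (p-2) : ℤ)-1))) := by ring
    rw [heq]
    exact dvd_add hkey hmul
  have hcop : IsCoprime (((p:ℤ))^2) (2:ℤ) := by
    apply IsCoprime.pow_left
    have hnat : Nat.Coprime p 2 := (hp.coprime_iff_not_dvd).mpr (by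
      intro h
      have := Nat.le_of_dvd (by omega) h
      omega)
    exact_mod_cast Nat.isCoprime_iff_coprime.mpr hnat
  have hfin : ((p:ℤ))^2 ∣ (2^(p-1) - 1) - p * (2*(N (p-2) : ℤ)-1) := by
    have heq2 : (2^p - 2 : ℤ) - p * (2*(2*(N (p-2) : ℤ)-1))
        = 2 * ((2^(p-1) - 1) - p*(2*(N (p-2) : ℤ)-1)) := by
      have hpw : (2:ℤ)^p = 2^(p-1) * 2 := by rw [← pow_succ, show p-1+1 = p by omega]
      rw [hpw]; ring
    rw [heq2] at h2
    exact hcop.dvd_of_dvd_mul_left h2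
  have hfermat : (p:ℤ) ∣ 2^(p-1) - 1 := by
    have h2ne : (2 : ZMod p) ≠ 0 := by
      have h2' : ((2:ℕ) : ZMod p) ≠ 0 := by
        rw [Ne, ZMod.natCast_eq_zero_iff]
        intro h
        have := Nat.le_of_dvd (by omega) h
        omega
      simpa using h2'
    have hf := ZMod.pow_card_sub_one_eq_one h2ne
    rw [← ZMod.intCast_zmod_eq_zero_iff_dvd]
    push_cast
    rw [hf]
    ring
  have hQp : (p:ℤ) * ((2^(p-1) - 1) / p) = 2^(p-1) - 1 := Int.mul_ediv_cancel' hfermat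
  have hfin2 : ((p:ℤ))^2 ∣ p * ((2^(p-1) - 1) / p - (2*(N (p-2) : ℤ)-1)) := by
    rw [mul_sub, hQp]
    exact hfin
  rw [pow_two] at hfin2
  exact (mul_dvd_mul_iff_left hp0).mp hfin2
end
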